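/- arXiv:1806.04496 — 9 statements merged into one kernel-verified Lean document; each statement's English description precedes it below -/
import Mathlib

section
/- Every compact strictly convex geodesic space is uniformly convex. -/
open Metric Set

/-- A geodesic joining `x` to `y`, parameterized on `[0, dist x y]`. -/
def IsGeodesic {X : Type*} [MetricSpace X] (x y : X) (γ : ℝ → X) : Prop :=
  γ 0 = x ∧ γ (dist x y) = y ∧
    ∀ s ∈ Set.Icc (0:ℝ) (dist x y), ∀ t ∈ Set.Icc (0:ℝ) (dist x y),
      dist (γ s) (γ t) = |s - t|

/-- A geodesic space: every two points are joined by a geodesic. -/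
def GeodesicSpace (X : Type*) [MetricSpace X] : Prop :=
  ∀ x y : X, ∃ γ : ℝ → X, IsGeodesic x y γ

/-- A uniquely geodesic space: every two points are joined by exactly one geodesic. -/
def UniquelyGeodesic (X : Type*) [MetricSpace X] : Prop :=
  ∀ x y : X, (∃ γ : ℝ → X, IsGeodesic x y γ) ∧
    ∀ γ₁ γ₂ : ℝ → X, IsGeodesic x y γ₁ → IsGeodesic x y γ₂ →
      Set.EqOn γ₁ γ₂ (Set.Icc 0 (dist x y))

/-- `m` is a midpoint of `x` and `y`. -/
def IsMidpoint {X : Type*} [MetricSpace X] (m x y : X) : Prop :=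
  dist m x = dist x y / 2 ∧ dist m y = dist x y / 2

/-- Strict convexity of a geodesic space. -/
def StrictlyConvexGS (X : Type*) [MetricSpace X] : Prop :=
  ∀ z x y m : X, x ≠ y → IsMidpoint m x y →
    dist z m < max (dist z x) (dist z y)

/-- Uniform convexity of a geodesic space. -/
def UniformlyConvexGS (X : Type*) [MetricSpace X] : Prop :=
  ∀ ε ∈ Set.Ioc (0:ℝ) 2, ∀ r > (0:ℝ), ∃ δ ∈ Set.Ioc (0:ℝ) 1,
    ∀ z x y m : X, IsMidpoint m x y →
      dist z x ≤ r → dist z y ≤ r → ε * r ≤ dist x y →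
        dist z m ≤ (1 - δ) * r

/-- `seg x y` is the geodesic segment with endpoints `x` and `y`
(the image of a geodesic joining `x` to `y`). -/
def IsSegSystem {X : Type*} [MetricSpace X] (seg : X → X → Set X) : Prop :=
  ∀ x y : X, ∃ γ : ℝ → X, IsGeodesic x y γ ∧
    seg x y = γ '' Set.Icc 0 (dist x y)

/-- `comb t x y` is the point `(1-t)x + ty` on the segment `seg x y`. -/
def IsCombSystem {X : Type*} [MetricSpace X] (seg : X → X → Set X)
    (comb : ℝ → X → X → X) : Prop :=
  ∀ t ∈ Set.Icc (0:ℝ) 1, ∀ x y : X,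
    comb t x y ∈ seg x y ∧ dist (comb t x y) x = t * dist x y ∧
      dist (comb t x y) y = (1 - t) * dist x y

/-- `Φ` is a modulus of uniform uniqueness for the segments `seg`. -/
def UniqModulus {X : Type*} [MetricSpace X] (seg : X → X → Set X)
    (Φ : ℝ → ℝ → ℝ) : Prop :=
  ∀ ε > (0:ℝ), ∀ b > (0:ℝ), ∀ x y z : X,
    ∀ r₁ ∈ Set.Ioc (0:ℝ) b, ∀ r₂ ∈ Set.Ioc (0:ℝ) b,
      dist z x ≤ r₁ → dist z y ≤ r₂ + Φ ε b → r₁ + r₂ ≤ dist x y →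
        Metric.infDist z (seg x y) < ε

/-- `Θ` is a modulus of uniform betweenness for the segments `seg`. -/
def BtwModulus {X : Type*} [MetricSpace X] (seg : X → X → Set X)
    (Θ : ℝ → ℝ → ℝ → ℝ) : Prop :=
  ∀ ε > (0:ℝ), ∀ a > (0:ℝ), ∀ b > (0:ℝ), ∀ x y z w : X,
    (∀ u ∈ ({x, y, z, w} : Set X), ∀ v ∈ ({x, y, z, w} : Set X), u ≠ v → a ≤ dist u v) →
    (∀ u ∈ ({x, y, z, w} : Set X), ∀ v ∈ ({x, y, z, w} : Set X), dist u v ≤ b) →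
    Metric.infDist y (seg x z) < Θ ε a b → Metric.infDist z (seg y w) < Θ ε a b →
      Metric.infDist y (seg x w) < ε ∧ Metric.infDist z (seg x w) < ε

/-- Every compact strictly convex geodesic space is uniformly convex. -/
theorem compact_strictlyConvex_uniformlyConvex {X : Type*} [MetricSpace X]
    [CompactSpace X] (hgeo : GeodesicSpace X) (hsc : StrictlyConvexGS X) :
    UniformlyConvexGS X := by
  intro ε hε r hr
  set S : Set (X × X × X × X) :=
    {p | (dist p.2.2.2 p.2.1 = dist p.2.1 p.2.2.1 / 2 ∧
          dist p.2.2.2 p.2.2.1 = dist p.2.1 p.2.2.1 / 2) ∧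
         dist p.1 p.2.1 ≤ r ∧ dist p.1 p.2.2.1 ≤ r ∧ ε * r ≤ dist p.2.1 p.2.2.1} with hSdef
  have hcl : IsClosed S := by
    rw [hSdef]
    simp only [Set.setOf_and]
    exact (((isClosed_eq (by fun_prop) (by fun_prop)).inter
      (isClosed_eq (by fun_prop) (by fun_prop))).inter
      ((isClosed_le (by fun_prop) (by fun_prop)).inter
      ((isClosed_le (by fun_prop) (by fun_prop)).inter
      (isClosed_le (by fun_prop) (by fun_prop)))))
  by_cases hS : S.Nonempty
  · have hScompact : IsCompact S := hcl.isCompact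
    obtain ⟨p₀, hp₀, hmax⟩ := hScompact.exists_isMaxOn hS
      ((continuous_fst.dist (continuous_snd.comp (continuous_snd.comp continuous_snd))).continuousOn)
    set M : ℝ := dist p₀.1 p₀.2.2.2 with hM
    have hxy : p₀.2.1 ≠ p₀.2.2.1 := by
      intro h
      have h1 := hp₀.2.2.2
      rw [h, dist_self] at h1
      nlinarith [hε.1]
    have hlt : M < r := by
      have := hsc p₀.1 p₀.2.1 p₀.2.2.1 p₀.2.2.2 hxy ⟨hp₀.1.1, hp₀.1.2⟩
      calc M < max (dist p₀.1 p₀.2.1) (dist p₀.1 p₀.2.2.1) := this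
        _ ≤ r := max_le hp₀.2.1 hp₀.2.2.1
    have hM0 : 0 ≤ M := dist_nonneg
    refine ⟨(r - M) / r, ⟨div_pos (by linarith) hr, by
      rw [div_le_one hr]; linarith⟩, ?_⟩
    intro z x y m hmid hzx hzy hεr
    have hmem : (z, x, y, m) ∈ S := ⟨⟨hmid.1, hmid.2⟩, hzx, hzy, hεr⟩
    have := hmax hmem
    have h1 : (1 - (r - M) / r) * r = M := by
      field_simp; ring
    rw [h1]
    exact this
  · refine ⟨1, ⟨one_pos, le_refl 1⟩, ?_⟩
    intro z x y m hmid hzx hzy hεr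
    exact (hS ⟨(z, x, y, m), ⟨⟨hmid.1, hmid.2⟩, hzx, hzy, hεr⟩⟩).elim
end

section
/- Every compact uniquely geodesic metric space is uniformly uniquely geodesic: for all ε,b>0 there exists φ>0 such that for all x,y,z∈X and all r₁,r₂∈(0,b], if d(z,x)≤r₁, d(z,y)≤r₂+φ and d(x,y)≥r₁+r₂, then dist(z,[x,y])<ε, where [x,y] denotes the unique geodesic segment from x to y. -/
open Metric Set

lemma concat_geodesic {X : Type*} [MetricSpace X] {x w y : X}
    (h : dist x w + dist w y = dist x y)
    {α β : ℝ → X} (hα : IsGeodesic x w α) (hβ : IsGeodesic w y β) :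
    IsGeodesic x y (fun t => if t ≤ dist x w then α t else β (t - dist x w)) := by
  obtain ⟨hα0, hα1, hαd⟩ := hα
  obtain ⟨hβ0, hβ1, hβd⟩ := hβ
  set a := dist x w with ha_def
  set D := dist x y with hD_def
  have ha0 : 0 ≤ a := dist_nonneg
  have hwy : dist w y = D - a := by linarith
  have haD : a ≤ D := by have := dist_nonneg (x := w) (y := y); linarith
  set γ : ℝ → X := fun t => if t ≤ a then α t else β (t - a) with hγ_def
  -- distances from endpoints
  have dxγ : ∀ t ∈ Set.Icc (0:ℝ) D, dist x (γ t) = t ∧ dist (γ t) y = D - t := by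
    intro t ht
    by_cases hta : t ≤ a
    · have h1 : dist x (α t) = t := by
        have := hαd 0 ⟨le_refl _, ha0⟩ t ⟨ht.1, hta⟩
        rw [hα0] at this
        rw [this, abs_sub_comm, abs_of_nonneg (by linarith [ht.1])]; ring
      have h2 : dist (α t) w = a - t := by
        have := hαd t ⟨ht.1, hta⟩ a ⟨ha0, le_refl _⟩
        rw [hα1] at this
        rw [this, abs_of_nonpos (by linarith)]; ring
      have hle : dist (α t) y ≤ D - t := by
        calc dist (α t) y ≤ dist (α t) w + dist w y := dist_triangle _ _ _
          _ = D - t := by rw [h2, hwy]; ring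
      have hge : D - t ≤ dist (α t) y := by
        have := dist_triangle x (α t) y
        rw [h1] at this; linarith
      have hγt : γ t = α t := if_pos hta
      rw [hγt]
      exact ⟨h1, le_antisymm hle hge⟩
    · push_neg at hta
      have hmem : t - a ∈ Set.Icc (0:ℝ) (dist w y) := by
        rw [hwy]; constructor <;> [linarith; linarith [ht.2]]
      have h1 : dist w (β (t - a)) = t - a := by
        have := hβd 0 ⟨le_refl _, by rw [hwy]; linarith⟩ (t - a) hmem
        rw [hβ0] at this
        rw [this, abs_sub_comm, abs_of_nonneg (by linarith)]; ring
      have h2 : dist (β (t - a)) y = D - t := by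
        have := hβd (t - a) hmem (dist w y) ⟨dist_nonneg, le_refl _⟩
        rw [hβ1] at this
        rw [this, hwy, abs_of_nonpos (by linarith [ht.2])]; ring
      have hle : dist x (β (t - a)) ≤ t := by
        calc dist x (β (t - a)) ≤ dist x w + dist w (β (t - a)) := dist_triangle _ _ _
          _ = t := by rw [h1]; ring
      have hge : t ≤ dist x (β (t - a)) := by
        have := dist_triangle x (β (t - a)) y
        rw [h2] at this; linarith
      have hγt : γ t = β (t - a) := if_neg (by linarith)
      rw [hγt]
      exact ⟨le_antisymm hle hge, h2⟩
  have key : ∀ s ∈ Set.Icc (0:ℝ) D, ∀ t ∈ Set.Icc (0:ℝ) D, s ≤ t →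
      dist (γ s) (γ t) = t - s := by
    intro s hs t ht hst
    apply le_antisymm
    · by_cases hta : t ≤ a
      · have hsa : s ≤ a := le_trans hst hta
        have hγs : γ s = α s := if_pos hsa
        have hγt : γ t = α t := if_pos hta
        rw [hγs, hγt, hαd s ⟨hs.1, hsa⟩ t ⟨ht.1, hta⟩, abs_of_nonpos (by linarith)]
        linarith
      · push_neg at hta
        by_cases hsa : s ≤ a
        · have hγs : γ s = α s := if_pos hsa
          have hγt : γ t = β (t - a) := if_neg (by linarith)
          have h2 : dist (α s) w = a - s := by
            have := hαd s ⟨hs.1, hsa⟩ a ⟨ha0, le_refl _⟩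
            rw [hα1] at this
            rw [this, abs_of_nonpos (by linarith)]; ring
          have hmem : t - a ∈ Set.Icc (0:ℝ) (dist w y) := by
            rw [hwy]; constructor <;> [linarith; linarith [ht.2]]
          have h1 : dist w (β (t - a)) = t - a := by
            have := hβd 0 ⟨le_refl _, by rw [hwy]; linarith⟩ (t - a) hmem
            rw [hβ0] at this
            rw [this, abs_sub_comm, abs_of_nonneg (by linarith)]; ring
          calc dist (γ s) (γ t) ≤ dist (γ s) w + dist w (γ t) := dist_triangle _ _ _
            _ = t - s := by rw [hγs, hγt, h2, h1]; ring
        · push_neg at hsa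
          have hγs : γ s = β (s - a) := if_neg (by linarith)
          have hγt : γ t = β (t - a) := if_neg (by linarith)
          have hmem_s : s - a ∈ Set.Icc (0:ℝ) (dist w y) := by
            rw [hwy]; constructor <;> [linarith; linarith [hs.2]]
          have hmem_t : t - a ∈ Set.Icc (0:ℝ) (dist w y) := by
            rw [hwy]; constructor <;> [linarith; linarith [ht.2]]
          rw [hγs, hγt, hβd _ hmem_s _ hmem_t, abs_of_nonpos (by linarith)]
          linarith
    · have h1 := (dxγ s hs).1
      have h2 := (dxγ t ht).1
      have := abs_dist_sub_le (γ s) (γ t) x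
      rw [dist_comm (γ s) x, dist_comm (γ t) x, h1, h2] at this
      have := abs_le.mp this
      linarith [this.1, this.2]
  refine ⟨?_, ?_, ?_⟩
  · show γ 0 = x
    have : γ 0 = α 0 := if_pos ha0
    rw [this, hα0]
  · show γ D = y
    by_cases hDa : D ≤ a
    · have haD' : a = D := le_antisymm haD hDa
      have : γ D = α D := if_pos hDa
      rw [this, ← haD', hα1]
      have : dist w y = 0 := by rw [hwy, haD']; ring
      exact (dist_eq_zero.mp this)
    · push_neg at hDa
      have : γ D = β (D - a) := if_neg (by linarith)
      rw [this, ← hwy, hβ1]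
  · intro s hs t ht
    rcases le_total s t with hst | hts
    · rw [key s hs t ht hst, abs_of_nonpos (by linarith)]; ring
    · rw [dist_comm, key t ht s hs hts, abs_of_nonneg (by linarith)]

lemma between_eq {X : Type*} [MetricSpace X] (huniq : UniquelyGeodesic X)
    {x y z p : X} (hz : dist x z + dist z y = dist x y)
    (hp : dist x p + dist p y = dist x y) (hzp : dist x z = dist x p) : z = p := by
  obtain ⟨α₁, hα₁⟩ := (huniq x z).1
  obtain ⟨β₁, hβ₁⟩ := (huniq z y).1
  obtain ⟨α₂, hα₂⟩ := (huniq x p).1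
  obtain ⟨β₂, hβ₂⟩ := (huniq p y).1
  have g₁ := concat_geodesic hz hα₁ hβ₁
  have g₂ := concat_geodesic hp hα₂ hβ₂
  have hmem : dist x z ∈ Set.Icc (0:ℝ) (dist x y) := by
    exact ⟨dist_nonneg, by linarith [dist_nonneg (x := z) (y := y)]⟩
  have heq := (huniq x y).2 _ _ g₁ g₂ hmem
  simp only at heq
  rw [if_pos (le_refl (dist x z)), hα₁.2.1] at heq
  rw [hzp, if_pos (le_refl (dist x p)), hα₂.2.1] at heq
  exact heq

/-- Every compact uniquely geodesic metric space is uniformly uniquely geodesic. -/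
theorem compact_uniquelyGeodesic_uniformlyUniquelyGeodesic {X : Type*} [MetricSpace X]
    [CompactSpace X] (huniq : UniquelyGeodesic X)
    (seg : X → X → Set X) (hseg : IsSegSystem seg) :
    ∀ ε > (0:ℝ), ∀ b > (0:ℝ), ∃ φ > (0:ℝ), ∀ x y z : X,
      ∀ r₁ ∈ Set.Ioc (0:ℝ) b, ∀ r₂ ∈ Set.Ioc (0:ℝ) b,
        dist z x ≤ r₁ → dist z y ≤ r₂ + φ → r₁ + r₂ ≤ dist x y →
          Metric.infDist z (seg x y) < ε := by
  intro ε hε b hb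
  by_contra hcon
  push_neg at hcon
  have h' : ∀ n : ℕ, ∃ x y z : X, ∃ r₁ ∈ Set.Ioc (0:ℝ) b, ∃ r₂ ∈ Set.Ioc (0:ℝ) b,
      dist z x ≤ r₁ ∧ dist z y ≤ r₂ + 1/(n+1) ∧ r₁ + r₂ ≤ dist x y ∧
      ε ≤ Metric.infDist z (seg x y) := fun n => hcon (1/(n+1)) (by positivity)
  choose xs ys zs rs₁ hrs₁ rs₂ hrs₂ h1 h2 h3 h4 using h'
  choose γs hγ hsegeq using fun n => hseg (xs n) (ys n)
  set ps : ℕ → X := fun n => γs n (rs₁ n) with hps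
  have hrmem : ∀ n, rs₁ n ∈ Set.Icc (0:ℝ) (dist (xs n) (ys n)) := fun n =>
    ⟨le_of_lt (hrs₁ n).1, by linarith [(hrs₂ n).1, h3 n]⟩
  have hpmem : ∀ n, ps n ∈ seg (xs n) (ys n) := fun n => by
    rw [hsegeq n]; exact ⟨rs₁ n, hrmem n, rfl⟩
  have hpx : ∀ n, dist (ps n) (xs n) = rs₁ n := fun n => by
    have := (hγ n).2.2 (rs₁ n) (hrmem n) 0 ⟨le_refl _, dist_nonneg⟩
    rw [(hγ n).1] at this
    rw [this]; simp [abs_of_nonneg (le_of_lt (hrs₁ n).1)]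
  have hpy : ∀ n, dist (ps n) (ys n) = dist (xs n) (ys n) - rs₁ n := fun n => by
    have := (hγ n).2.2 (rs₁ n) (hrmem n) (dist (xs n) (ys n)) ⟨dist_nonneg, le_refl _⟩
    rw [(hγ n).2.1] at this
    rw [this, abs_of_nonpos (by linarith [(hrmem n).2])]; ring
  have hzp : ∀ n, ε ≤ dist (zs n) (ps n) := fun n =>
    le_trans (h4 n) (Metric.infDist_le_dist_of_mem (hpmem n))
  -- compactness
  set u : ℕ → X × X × X × X × ℝ × ℝ := fun n =>
    (xs n, ys n, zs n, ps n, rs₁ n, rs₂ n) with hu_def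
  have hK : IsCompact ((Set.univ : Set X) ×ˢ (Set.univ : Set X) ×ˢ (Set.univ : Set X) ×ˢ
      (Set.univ : Set X) ×ˢ (Set.Icc (0:ℝ) b) ×ˢ (Set.Icc (0:ℝ) b)) :=
    isCompact_univ.prod (isCompact_univ.prod (isCompact_univ.prod
      (isCompact_univ.prod (isCompact_Icc.prod isCompact_Icc))))
  have humem : ∀ n, u n ∈ ((Set.univ : Set X) ×ˢ (Set.univ : Set X) ×ˢ (Set.univ : Set X) ×ˢ
      (Set.univ : Set X) ×ˢ (Set.Icc (0:ℝ) b) ×ˢ (Set.Icc (0:ℝ) b)) := fun n => by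
    refine ⟨trivial, trivial, trivial, trivial, ?_, ?_⟩
    · exact ⟨le_of_lt (hrs₁ n).1, (hrs₁ n).2⟩
    · exact ⟨le_of_lt (hrs₂ n).1, (hrs₂ n).2⟩
  obtain ⟨⟨x', y', z', p', r₁', r₂'⟩, _, φ, hφmono, hφlim⟩ := hK.tendsto_subseq humem
  have hx : Filter.Tendsto (fun k => xs (φ k)) Filter.atTop (nhds x') :=
    (continuous_fst.tendsto _).comp hφlim
  have hy : Filter.Tendsto (fun k => ys (φ k)) Filter.atTop (nhds y') :=
    ((continuous_fst.comp continuous_snd).tendsto _).comp hφlim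
  have hz : Filter.Tendsto (fun k => zs (φ k)) Filter.atTop (nhds z') :=
    ((continuous_fst.comp (continuous_snd.comp continuous_snd)).tendsto _).comp hφlim
  have hp : Filter.Tendsto (fun k => ps (φ k)) Filter.atTop (nhds p') :=
    ((continuous_fst.comp (continuous_snd.comp (continuous_snd.comp continuous_snd))).tendsto _).comp hφlim
  have hr1 : Filter.Tendsto (fun k => rs₁ (φ k)) Filter.atTop (nhds r₁') :=
    ((continuous_fst.comp (continuous_snd.comp (continuous_snd.comp
      (continuous_snd.comp continuous_snd)))).tendsto _).comp hφlim
  have hr2 : Filter.Tendsto (fun k => rs₂ (φ k)) Filter.atTop (nhds r₂') :=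
    ((continuous_snd.comp (continuous_snd.comp (continuous_snd.comp
      (continuous_snd.comp continuous_snd)))).tendsto _).comp hφlim
  -- limit inequalities
  have hone : Filter.Tendsto (fun k => (1:ℝ)/(φ k + 1)) Filter.atTop (nhds 0) := by
    have := (tendsto_one_div_add_atTop_nhds_zero_nat (𝕜 := ℝ)).comp hφmono.tendsto_atTop
    exact this
  have hA : dist z' x' ≤ r₁' :=
    le_of_tendsto_of_tendsto' (hz.dist hx) hr1 (fun k => h1 (φ k))
  have hB : dist z' y' ≤ r₂' := by
    have hlim2 : Filter.Tendsto (fun k => rs₂ (φ k) + 1/(φ k + 1)) Filter.atTop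
        (nhds (r₂' + 0)) := hr2.add hone
    rw [add_zero] at hlim2
    exact le_of_tendsto_of_tendsto' (hz.dist hy) hlim2 (fun k => h2 (φ k))
  have hC : r₁' + r₂' ≤ dist x' y' :=
    le_of_tendsto_of_tendsto' (hr1.add hr2) (hx.dist hy) (fun k => h3 (φ k))
  have hPX : dist p' x' = r₁' := by
    refine tendsto_nhds_unique (hp.dist hx) ?_
    have : (fun k => dist (ps (φ k)) (xs (φ k))) = fun k => rs₁ (φ k) :=
      funext fun k => hpx (φ k)
    rw [this]; exact hr1
  have hPY : dist p' y' = dist x' y' - r₁' := by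
    refine tendsto_nhds_unique (hp.dist hy) ?_
    have : (fun k => dist (ps (φ k)) (ys (φ k))) =
        fun k => dist (xs (φ k)) (ys (φ k)) - rs₁ (φ k) := funext fun k => hpy (φ k)
    rw [this]; exact (hx.dist hy).sub hr1
  have hZP : ε ≤ dist z' p' :=
    le_of_tendsto_of_tendsto' tendsto_const_nhds (hz.dist hp) (fun k => hzp (φ k))
  -- conclude
  have htri : dist x' y' ≤ dist x' z' + dist z' y' := dist_triangle _ _ _
  rw [dist_comm x' z'] at htri
  have hexz : dist z' x' = r₁' := by linarith
  have hezy : dist z' y' = r₂' := by linarith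
  have hexy : dist x' y' = r₁' + r₂' := by linarith
  have heq : z' = p' := by
    apply between_eq huniq (y := y')
    · rw [dist_comm x' z', hexz, hezy, hexy]
    · rw [dist_comm x' p', hPX, hPY]; ring
    · rw [dist_comm x' z', dist_comm x' p', hexz, hPX]
  rw [heq, dist_self] at hZP
  linarith
end

section
/- Let (X,d) be a uniformly convex geodesic space admitting a monotone modulus of uniform convexity η (nonincreasing in the second argument). Then X is uniformly uniquely geodesic, and Φ(ε,b) = ε·η(ε/(b+ε), b+ε) is a modulus of uniform uniqueness: for all ε,b>0, all x,y,z∈X and r₁,r₂∈(0,b], if d(z,x)≤r₁, d(z,y)≤r₂+Φ(ε,b) and d(x,y)≥r₁+r₂, then dist(z,[x,y])<ε. -/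
open Metric Set

/-- A uniformly convex geodesic space with a monotone modulus of uniform convexity `η`
is uniformly uniquely geodesic, with modulus of uniform uniqueness
`Φ(ε,b) = ε * η (ε/(b+ε)) (b+ε)`. -/
theorem uniformlyConvex_uniformlyUniquelyGeodesic {X : Type*} [MetricSpace X]
    (hgeo : GeodesicSpace X) (η : ℝ → ℝ → ℝ)
    (hη : ∀ ε ∈ Set.Ioc (0:ℝ) 2, ∀ r > (0:ℝ), η ε r ∈ Set.Ioc (0:ℝ) 1 ∧
      ∀ z x y m : X, IsMidpoint m x y →
        dist z x ≤ r → dist z y ≤ r → ε * r ≤ dist x y →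
          dist z m ≤ (1 - η ε r) * r)
    (hmono : ∀ ε ∈ Set.Ioc (0:ℝ) 2, ∀ r r' : ℝ, 0 < r → r ≤ r' → η ε r' ≤ η ε r)
    (seg : X → X → Set X) (hseg : IsSegSystem seg) :
    UniquelyGeodesic X ∧
      UniqModulus seg (fun ε b => ε * η (ε / (b + ε)) (b + ε)) := by
  have hmid : ∀ p q : X, ∃ m : X, IsMidpoint m p q := by
    intro p q
    obtain ⟨γ, h0, hd, hpr⟩ := hgeo p q
    have hdn : (0:ℝ) ≤ dist p q := dist_nonneg
    refine ⟨γ (dist p q / 2), ?_, ?_⟩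
    · have h := hpr (dist p q / 2) ⟨by linarith, by linarith⟩ 0 ⟨le_refl _, hdn⟩
      rw [h0, sub_zero, abs_of_nonneg (by linarith)] at h
      exact h
    · have h := hpr (dist p q / 2) ⟨by linarith, by linarith⟩ (dist p q) ⟨hdn, le_refl _⟩
      rw [hd, abs_of_nonpos (by linarith)] at h
      rw [h]; ring
  constructor
  · -- uniquely geodesic
    intro x y
    refine ⟨hgeo x y, ?_⟩
    intro γ₁ γ₂ h1 h2 t ht
    by_contra hne
    obtain ⟨h10, h1d, h1p⟩ := h1
    obtain ⟨h20, h2d, h2p⟩ := h2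
    set s := dist x y with hs
    have hsnn : 0 ≤ s := dist_nonneg
    have ht0 : t ≠ 0 := by rintro rfl; exact hne (h10.trans h20.symm)
    have hts : t ≠ s := by rintro rfl; exact hne (h1d.trans h2d.symm)
    have ht0' : 0 < t := lt_of_le_of_ne ht.1 (Ne.symm ht0)
    have hts' : t < s := lt_of_le_of_ne ht.2 hts
    set p := γ₁ t with hp
    set q := γ₂ t with hq
    have hdpq : 0 < dist p q := dist_pos.mpr hne
    have hxp : dist x p = t := by
      rw [← h10, dist_comm, h1p t ht 0 ⟨le_refl _, hsnn⟩, sub_zero, abs_of_nonneg ht.1]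
    have hxq : dist x q = t := by
      rw [← h20, dist_comm, h2p t ht 0 ⟨le_refl _, hsnn⟩, sub_zero, abs_of_nonneg ht.1]
    have hyp : dist y p = s - t := by
      rw [← h1d, dist_comm, h1p t ht s ⟨hsnn, le_refl _⟩, abs_of_nonpos (by linarith)]
      ring
    have hyq : dist y q = s - t := by
      rw [← h2d, dist_comm, h2p t ht s ⟨hsnn, le_refl _⟩, abs_of_nonpos (by linarith)]
      ring
    obtain ⟨m, hm⟩ := hmid p q
    have hle1 : dist p q ≤ 2 * t := by
      have := dist_triangle p x q
      rw [dist_comm p x] at this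
      linarith
    have hle2 : dist p q ≤ 2 * (s - t) := by
      have := dist_triangle p y q
      rw [dist_comm p y] at this
      linarith
    have hmem1 : dist p q / t ∈ Set.Ioc (0:ℝ) 2 := by
      constructor
      · exact div_pos hdpq ht0'
      · rw [div_le_iff₀ ht0']; linarith
    have hmem2 : dist p q / (s - t) ∈ Set.Ioc (0:ℝ) 2 := by
      constructor
      · exact div_pos hdpq (by linarith)
      · rw [div_le_iff₀ (by linarith : (0:ℝ) < s - t)]; linarith
    obtain ⟨hη1, hUC1⟩ := hη _ hmem1 t ht0'
    obtain ⟨hη2, hUC2⟩ := hη _ hmem2 (s - t) (by linarith)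
    have hxm : dist x m ≤ (1 - η (dist p q / t) t) * t :=
      hUC1 x p q m hm (le_of_eq hxp) (le_of_eq hxq)
        (by rw [div_mul_cancel₀ _ (ne_of_gt ht0')])
    have hym : dist y m ≤ (1 - η (dist p q / (s - t)) (s - t)) * (s - t) :=
      hUC2 y p q m hm (le_of_eq hyp) (le_of_eq hyq)
        (by rw [div_mul_cancel₀ _ (by linarith : s - t ≠ 0)])
    have htri : s ≤ dist x m + dist y m := by
      have := dist_triangle x m y
      rw [dist_comm m y] at this
      linarith
    nlinarith [hη1.1, hη2.1, mul_pos hη1.1 ht0', mul_pos hη2.1 (by linarith : (0:ℝ) < s - t)]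
  · -- uniform uniqueness modulus
    intro ε hε b hb x y z r₁ hr₁ r₂ hr₂ hzx hzy hxy
    set ε₀ := ε / (b + ε) with hε₀def
    set η₀ := η ε₀ (b + ε) with hη₀def
    have hbε : (0:ℝ) < b + ε := by linarith
    have hε₀mem : ε₀ ∈ Set.Ioc (0:ℝ) 2 := by
      constructor
      · exact div_pos hε hbε
      · rw [hε₀def, div_le_iff₀ hbε]; linarith
    obtain ⟨hη₀mem, _⟩ := hη ε₀ hε₀mem (b + ε) hbε
    have hε₀mul : ε₀ * (b + ε) = ε := div_mul_cancel₀ _ (ne_of_gt hbε)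
    by_contra hcon
    push_neg at hcon
    obtain ⟨γ, hγ, hsegeq⟩ := hseg x y
    obtain ⟨h0, hdd, hpr⟩ := hγ
    set s := dist x y with hs
    have hsnn : (0:ℝ) ≤ s := dist_nonneg
    have hxmem : x ∈ seg x y := by rw [hsegeq]; exact ⟨0, ⟨le_refl _, hsnn⟩, h0⟩
    have hεx : ε ≤ dist z x := le_trans hcon (Metric.infDist_le_dist_of_mem hxmem)
    have hεr₁ : ε ≤ r₁ := le_trans hεx hzx
    have hεs : ε < s := by linarith [hr₂.1, hxy]
    have hmemt : s - r₂ ∈ Set.Icc (0:ℝ) s := ⟨by linarith [hr₁.1, hxy], by linarith [hr₂.1]⟩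
    set p := γ (s - r₂) with hpdef
    have hpmem : p ∈ seg x y := by rw [hsegeq]; exact ⟨s - r₂, hmemt, rfl⟩
    have hεp : ε ≤ dist z p := le_trans hcon (Metric.infDist_le_dist_of_mem hpmem)
    have hxp : dist x p = s - r₂ := by
      rw [← h0, dist_comm, hpr (s - r₂) hmemt 0 ⟨le_refl _, hsnn⟩, sub_zero,
        abs_of_nonneg hmemt.1]
    have hyp : dist y p = r₂ := by
      rw [← hdd, dist_comm, hpr (s - r₂) hmemt s ⟨hsnn, le_refl _⟩,
        abs_of_nonpos (by linarith [hr₂.1])]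
      ring
    obtain ⟨m, hm⟩ := hmid z p
    have hΦpos : (0:ℝ) < ε * η₀ := mul_pos hε hη₀mem.1
    have hΦε : ε * η₀ ≤ ε := by nlinarith [hη₀mem.2]
    have hsub : s ≤ r₁ + r₂ + ε * η₀ := by
      have := dist_triangle x z y
      rw [dist_comm x z] at this
      linarith
    -- application 1: center x, radius s - r₂
    have hR₁pos : (0:ℝ) < s - r₂ := by linarith [hr₁.1, hxy]
    have hR₁le : s - r₂ ≤ b + ε := by linarith [hr₁.2]
    obtain ⟨hηR₁, hUC₁⟩ := hη ε₀ hε₀mem (s - r₂) hR₁pos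
    have hxzle : dist x z ≤ s - r₂ := by rw [dist_comm]; linarith [hxy, hr₂.1, hzx]
    have hxm : dist x m ≤ (1 - η ε₀ (s - r₂)) * (s - r₂) :=
      hUC₁ x z p m hm hxzle (le_of_eq hxp)
        (by nlinarith [hε₀mem.1])
    have hmono₁ : η₀ ≤ η ε₀ (s - r₂) := hmono ε₀ hε₀mem (s - r₂) (b + ε) hR₁pos hR₁le
    have hxm' : dist x m ≤ (1 - η₀) * (s - r₂) := by
      have h := mul_le_mul_of_nonneg_right (by linarith : 1 - η ε₀ (s - r₂) ≤ 1 - η₀) hR₁pos.le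
      linarith
    -- application 2: center y, radius r₂ + ε * η₀
    have hR₂pos : (0:ℝ) < r₂ + ε * η₀ := by linarith [hr₂.1]
    have hR₂le : r₂ + ε * η₀ ≤ b + ε := by linarith [hr₂.2]
    obtain ⟨hηR₂, hUC₂⟩ := hη ε₀ hε₀mem (r₂ + ε * η₀) hR₂pos
    have hyzle : dist y z ≤ r₂ + ε * η₀ := by rw [dist_comm]; exact hzy
    have hym : dist y m ≤ (1 - η ε₀ (r₂ + ε * η₀)) * (r₂ + ε * η₀) :=
      hUC₂ y z p m hm hyzle (by rw [hyp]; linarith [hΦpos.le])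
        (by nlinarith [hε₀mem.1])
    have hmono₂ : η₀ ≤ η ε₀ (r₂ + ε * η₀) := hmono ε₀ hε₀mem (r₂ + ε * η₀) (b + ε) hR₂pos hR₂le
    have hym' : dist y m ≤ (1 - η₀) * (r₂ + ε * η₀) := by
      have h := mul_le_mul_of_nonneg_right (by linarith : 1 - η ε₀ (r₂ + ε * η₀) ≤ 1 - η₀)
        hR₂pos.le
      linarith
    have htri : s ≤ dist x m + dist y m := by
      have := dist_triangle x m y
      rw [dist_comm m y] at this
      linarith
    have key : s ≤ (1 - η₀) * (s - r₂) + (1 - η₀) * (r₂ + ε * η₀) := by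
      linarith [htri, hxm', hym']
    have expand : (1 - η₀) * (s - r₂) + (1 - η₀) * (r₂ + ε * η₀)
        = s + ε * η₀ - η₀ * s - η₀ * (ε * η₀) := by ring
    have h1 : η₀ * s + η₀ * (ε * η₀) ≤ ε * η₀ := by linarith [key, expand]
    have h2 : (0:ℝ) ≤ η₀ * (ε * η₀) := mul_nonneg hη₀mem.1.le (mul_nonneg hε.le hη₀mem.1.le)
    have h3 : η₀ * ε < η₀ * s := mul_lt_mul_of_pos_left hεs hη₀mem.1
    have h4 : η₀ * ε = ε * η₀ := mul_comm _ _
    linarith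
end

section
/- Let (X,d) be a uniformly convex geodesic space with a monotone modulus of uniform convexity of the form η(ε,r)=ε·η̃(ε,r), where η̃ is nondecreasing in ε. Then Φ(ε,b) = ε·η̃(ε/(b+ε), b+ε) is a modulus of uniform uniqueness for X. -/
open Metric Set

set_option maxHeartbeats 1600000

/-- If a uniformly convex geodesic space has a monotone modulus of uniform convexity of the
form `η ε r = ε * η̃ ε r` with `η̃` nondecreasing in `ε`, then
`Φ(ε,b) = ε * η̃ (ε/(b+ε)) (b+ε)` is a modulus of uniform uniqueness. -/
theorem uniformlyConvex_uniformlyUniquelyGeodesic' {X : Type*} [MetricSpace X]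
    (hgeo : GeodesicSpace X) (ηt : ℝ → ℝ → ℝ)
    (hη : ∀ ε ∈ Set.Ioc (0:ℝ) 2, ∀ r > (0:ℝ), ε * ηt ε r ∈ Set.Ioc (0:ℝ) 1 ∧
      ∀ z x y m : X, IsMidpoint m x y →
        dist z x ≤ r → dist z y ≤ r → ε * r ≤ dist x y →
          dist z m ≤ (1 - ε * ηt ε r) * r)
    (hmono : ∀ ε ∈ Set.Ioc (0:ℝ) 2, ∀ r r' : ℝ, 0 < r → r ≤ r' →
      ε * ηt ε r' ≤ ε * ηt ε r)
    (hηtmono : ∀ ε ε' : ℝ, 0 < ε → ε ≤ ε' → ε' ≤ 2 → ∀ r > (0:ℝ), ηt ε r ≤ ηt ε' r)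
    (seg : X → X → Set X) (hseg : IsSegSystem seg) :
    UniqModulus seg (fun ε b => ε * ηt (ε / (b + ε)) (b + ε)) := by
  intro ε hε b hb x y z r₁ hr₁ r₂ hr₂ hzx hzy hrd
  simp only at hzy
  set b' := b + ε with hb'def
  have hb' : 0 < b' := by positivity
  set ε₀ := ε / b' with hε₀def
  have hε₀ : 0 < ε₀ := by positivity
  have hε₀2 : ε₀ ≤ 2 := by
    rw [hε₀def, div_le_iff₀ hb']; nlinarith
  set H := ηt ε₀ b' with hHdef
  have hHpos : 0 < H := by
    have := (hη ε₀ ⟨hε₀, hε₀2⟩ b' hb').1.1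
    nlinarith
  have hHhalf : H ≤ 1/2 := by
    have h1 : ηt ε₀ b' ≤ ηt 2 b' := hηtmono ε₀ 2 hε₀ hε₀2 le_rfl b' hb'
    have h2 := (hη 2 ⟨by norm_num, le_rfl⟩ b' hb').1.2
    nlinarith
  set Φ := ε * H with hΦdef
  have hΦpos : 0 < Φ := by positivity
  have hΦle : Φ ≤ ε / 2 := by
    rw [hΦdef]; nlinarith
  have hzyΦ : dist z y ≤ r₂ + Φ := hzy
  obtain ⟨hr₁pos, hr₁b⟩ := hr₁
  obtain ⟨hr₂pos, hr₂b⟩ := hr₂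
  set d := dist x y with hddef
  have hdpos : 0 < d := lt_of_lt_of_le (by linarith) hrd
  have hdub : d ≤ r₁ + r₂ + Φ := by
    have := dist_triangle x z y
    rw [dist_comm x z] at this
    linarith
  have hrr : 0 < r₁ + r₂ := by linarith
  obtain ⟨γ, ⟨hγ0, hγd, hγdist⟩, hsegxy⟩ := hseg x y
  set s₁ := d * r₁ / (r₁ + r₂) with hs₁def
  set s₂ := d * r₂ / (r₁ + r₂) with hs₂def
  have hsum : s₁ + s₂ = d := by
    rw [hs₁def, hs₂def]; field_simp
  have hs₁lb : r₁ ≤ s₁ := by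
    rw [hs₁def, le_div_iff₀ hrr]; nlinarith
  have hs₁ub : s₁ ≤ r₁ + Φ := by
    rw [hs₁def, div_le_iff₀ hrr]; nlinarith
  have hs₂lb : r₂ ≤ s₂ := by
    rw [hs₂def, le_div_iff₀ hrr]; nlinarith
  have hs₂ub : s₂ ≤ r₂ + Φ := by
    rw [hs₂def, div_le_iff₀ hrr]; nlinarith
  have hs₁pos : 0 < s₁ := lt_of_lt_of_le hr₁pos hs₁lb
  have hs₁d : s₁ ≤ d := by linarith
  set p := γ s₁ with hpdef
  have hxp : dist x p = s₁ := by
    have h := hγdist 0 ⟨le_rfl, hdpos.le⟩ s₁ ⟨hs₁pos.le, hs₁d⟩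
    rw [hγ0] at h
    rw [h]
    rw [abs_of_nonpos (by linarith)]
    ring
  have hyp : dist p y = s₂ := by
    have h := hγdist s₁ ⟨hs₁pos.le, hs₁d⟩ d ⟨hdpos.le, le_rfl⟩
    rw [hγd] at h
    rw [h, abs_of_nonpos (by linarith)]
    linarith
  have hpmem : p ∈ seg x y := by
    rw [hsegxy]
    exact ⟨s₁, ⟨hs₁pos.le, hs₁d⟩, rfl⟩
  have key : dist z p < ε := by
    by_contra hcon
    push_neg at hcon
    -- bounds ensuring ε/s₁ ≤ 2 and ε/(r₂+Φ) ≤ 2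
    have hd1 : ε ≤ 2 * s₁ := by
      have := dist_triangle z x p
      linarith [hxp ▸ this]
    have hd2 : ε ≤ 2 * (r₂ + Φ) := by
      have h := dist_triangle z y p
      rw [dist_comm y p, hyp] at h
      linarith
    -- midpoint of z and p
    obtain ⟨γ', hγ'0, hγ'd, hγ'dist⟩ := hgeo z p
    have hlpos : 0 < dist z p := lt_of_lt_of_le hε hcon
    set m := γ' (dist z p / 2) with hmdef
    have hmid : IsMidpoint m z p := by
      constructor
      · have h := hγ'dist (dist z p / 2) ⟨by linarith, by linarith⟩ 0 ⟨le_rfl, hlpos.le⟩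
        rw [hγ'0] at h
        rw [h, abs_of_nonneg (by linarith)]
        ring
      · have h := hγ'dist (dist z p / 2) ⟨by linarith, by linarith⟩ (dist z p)
          ⟨hlpos.le, le_rfl⟩
        rw [hγ'd] at h
        rw [h, abs_of_nonpos (by linarith)]
        ring
    -- apply uniform convexity from x with radius s₁
    have hε₁pos : 0 < ε / s₁ := by positivity
    have hε₁2 : ε / s₁ ≤ 2 := by rw [div_le_iff₀ hs₁pos]; linarith
    have hucx := (hη (ε / s₁) ⟨hε₁pos, hε₁2⟩ s₁ hs₁pos).2 x z p m hmid
      (by rw [dist_comm]; linarith) (le_of_eq hxp)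
      (by rw [div_mul_cancel₀ _ (ne_of_gt hs₁pos)]; exact hcon)
    -- apply uniform convexity from y with radius r₂ + Φ
    have hr₂Φpos : 0 < r₂ + Φ := by linarith
    have hε₂pos : 0 < ε / (r₂ + Φ) := by positivity
    have hε₂2 : ε / (r₂ + Φ) ≤ 2 := by rw [div_le_iff₀ hr₂Φpos]; linarith
    have hucy := (hη (ε / (r₂ + Φ)) ⟨hε₂pos, hε₂2⟩ (r₂ + Φ) hr₂Φpos).2 y z p m hmid
      (by rw [dist_comm]; linarith) (by rw [dist_comm]; linarith [hyp])
      (by rw [div_mul_cancel₀ _ (ne_of_gt hr₂Φpos)]; exact hcon)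
    -- compare moduli with H
    have hs₁b' : s₁ ≤ b' := by rw [hb'def]; linarith
    have hr₂Φb' : r₂ + Φ ≤ b' := by rw [hb'def]; linarith
    have hH1 : H ≤ ηt (ε / s₁) s₁ := by
      have h1 : ε₀ * ηt ε₀ b' ≤ ε₀ * ηt ε₀ s₁ :=
        hmono ε₀ ⟨hε₀, hε₀2⟩ s₁ b' hs₁pos hs₁b'
      have h2 : ηt ε₀ s₁ ≤ ηt (ε / s₁) s₁ := by
        apply hηtmono ε₀ (ε / s₁) hε₀ _ hε₁2 s₁ hs₁pos
        rw [hε₀def]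
        exact div_le_div_of_nonneg_left hε.le hs₁pos hs₁b'
      have h3 : ηt ε₀ b' ≤ ηt ε₀ s₁ := le_of_mul_le_mul_left h1 hε₀
      linarith
    have hH2 : H ≤ ηt (ε / (r₂ + Φ)) (r₂ + Φ) := by
      have h1 : ε₀ * ηt ε₀ b' ≤ ε₀ * ηt ε₀ (r₂ + Φ) :=
        hmono ε₀ ⟨hε₀, hε₀2⟩ (r₂ + Φ) b' hr₂Φpos hr₂Φb'
      have h2 : ηt ε₀ (r₂ + Φ) ≤ ηt (ε / (r₂ + Φ)) (r₂ + Φ) := by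
        apply hηtmono ε₀ (ε / (r₂ + Φ)) hε₀ _ hε₂2 (r₂ + Φ) hr₂Φpos
        rw [hε₀def]
        exact div_le_div_of_nonneg_left hε.le hr₂Φpos hr₂Φb'
      have h3 : ηt ε₀ b' ≤ ηt ε₀ (r₂ + Φ) := le_of_mul_le_mul_left h1 hε₀
      linarith
    -- derive the contradiction
    have hxm : dist x m ≤ s₁ - Φ := by
      have : (1 - ε / s₁ * ηt (ε / s₁) s₁) * s₁ = s₁ - ε * ηt (ε / s₁) s₁ := by
        field_simp
      rw [this] at hucx
      nlinarith
    have hym : dist y m ≤ r₂ := by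
      have : (1 - ε / (r₂ + Φ) * ηt (ε / (r₂ + Φ)) (r₂ + Φ)) * (r₂ + Φ)
          = (r₂ + Φ) - ε * ηt (ε / (r₂ + Φ)) (r₂ + Φ) := by
        field_simp
      rw [this] at hucy
      nlinarith
    have htri : d ≤ dist x m + dist y m := by
      have := dist_triangle x m y
      rw [dist_comm m y] at this
      exact this
    linarith
  calc Metric.infDist z (seg x y) ≤ dist z p := Metric.infDist_le_dist_of_mem hpmem
    _ < ε := key
end

section
/- For 1<p≤2, the function Φ(ε,b) = ((p−1)/8)·ε²/(b+ε) is a modulus of uniform uniqueness for any L_p space over a measurable space: for all ε,b>0, all points x,y,z and all r₁,r₂∈(0,b], if ‖z−x‖≤r₁, ‖z−y‖≤r₂+Φ(ε,b) and ‖x−y‖≥r₁+r₂, then dist(z,[x,y])<ε. -/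
open Metric Set MeasureTheory

/-- Concavity pairing: for `x^s` concave, moving a pair inward increases the sum. -/
lemma LpUU_concave_pair {s : ℝ} (hs0 : 0 ≤ s) (hs1 : s ≤ 1)
    {x1 y1 x2 y2 : ℝ} (hx1 : 0 ≤ x1) (h12 : x1 ≤ x2) (h1y : x1 ≤ y2)
    (hsum : x1 + y1 = x2 + y2) :
    x1 ^ s + y1 ^ s ≤ x2 ^ s + y2 ^ s := by
  have hx2y : x2 ≤ y1 := by linarith
  have hxy : x1 ≤ y1 := le_trans h12 hx2y
  rcases eq_or_lt_of_le hxy with h | hlt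
  · have hx2 : x2 = x1 := by linarith
    have hy2 : y2 = x1 := by linarith
    rw [hx2, hy2, ← h]
  · have hcc := Real.concaveOn_rpow hs0 hs1
    set θ : ℝ := (y1 - x2) / (y1 - x1) with hθ
    have hd : 0 < y1 - x1 := by linarith
    have hθ0 : 0 ≤ θ := div_nonneg (by linarith) hd.le
    have hθ1 : θ ≤ 1 := (div_le_one hd).2 (by linarith)
    have hmem1 : x1 ∈ Set.Ici (0:ℝ) := hx1
    have hmem2 : y1 ∈ Set.Ici (0:ℝ) := le_trans hx1 hxy
    have hθd : θ * (y1 - x1) = y1 - x2 := by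
      rw [hθ]; field_simp
    have e1 : θ * x1 + (1 - θ) * y1 = x2 := by nlinarith [hθd]
    have e2 : (1 - θ) * x1 + θ * y1 = y2 := by nlinarith [hθd, hsum]
    have c1 := hcc.2 hmem1 hmem2 (show (0:ℝ) ≤ θ from hθ0)
      (show (0:ℝ) ≤ 1 - θ by linarith) (show θ + (1 - θ) = 1 by ring)
    have c2 := hcc.2 hmem1 hmem2 (show (0:ℝ) ≤ 1 - θ by linarith)
      (show (0:ℝ) ≤ θ from hθ0) (show (1 - θ) + θ = 1 by ring)
    simp only [smul_eq_mul] at c1 c2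
    rw [e1] at c1
    rw [e2] at c2
    linarith

lemma LpUU_rpow_subadd {s x y : ℝ} (hs0 : 0 ≤ s) (hs1 : s ≤ 1) (hx : 0 ≤ x) (hy : 0 ≤ y) :
    (x + y) ^ s ≤ x ^ s + y ^ s := by
  lift x to NNReal using hx
  lift y to NNReal using hy
  have h := NNReal.rpow_add_le_add_rpow x y hs0 hs1
  exact_mod_cast h

lemma LpUU_beta_mono {p t t' : ℝ} (hp1 : 1 < p) (hp2 : p ≤ 2)
    (ht : 0 < t) (htt : t ≤ t') (ht1 : t' ≤ 1) :
    ((1+t)^(p-1) - (1-t)^(p-1)) * t'^(p-1) ≤ ((1+t')^(p-1) - (1-t')^(p-1)) * t^(p-1) := by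
  set s := p - 1 with hs
  have hs0 : 0 ≤ s := by simp [hs]; linarith
  have hs1 : s ≤ 1 := by simp [hs]; linarith
  have ht'0 : 0 < t' := lt_of_lt_of_le ht htt
  have e1 : (1+t)^s * t'^s = ((1+t)*t')^s := (Real.mul_rpow (by linarith) ht'0.le).symm
  have e2 : (1-t)^s * t'^s = ((1-t)*t')^s := (Real.mul_rpow (by linarith) ht'0.le).symm
  have e3 : (1+t')^s * t^s = ((1+t')*t)^s := (Real.mul_rpow (by linarith) ht.le).symm
  have e4 : (1-t')^s * t^s = ((1-t')*t)^s := (Real.mul_rpow (by linarith) ht.le).symm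
  have key := LpUU_concave_pair hs0 hs1
    (x1 := (1-t')*t) (y1 := (1+t)*t') (x2 := (1-t)*t') (y2 := (1+t')*t)
    (by nlinarith) (by nlinarith) (by nlinarith) (by ring)
  nlinarith [key, e1, e2, e3, e4]

lemma LpUU_alpha_le_two {p r : ℝ} (hp1 : 1 < p) (hp2 : p ≤ 2)
    (hr0 : 0 ≤ r) (hr1 : r ≤ 1) : (1+r)^(p-1) + (1-r)^(p-1) ≤ 2 := by
  have key := LpUU_concave_pair (s := p-1) (by linarith) (by linarith)
    (x1 := 1-r) (y1 := 1+r) (x2 := 1) (y2 := 1) (by linarith) (by linarith) (by linarith) (by ring)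
  rw [Real.one_rpow] at key
  linarith

lemma LpUU_beta_le_alpha_aux {p r : ℝ} (hp1 : 1 < p) (hp2 : p ≤ 2)
    (hr0 : 0 < r) (hr1 : r ≤ 1) :
    (1+r)^(p-1) - (1-r)^(p-1) ≤ r^(p-1) * ((1+r)^(p-1) + (1-r)^(p-1)) := by
  set s := p - 1 with hs
  have hs0 : 0 ≤ s := by simp [hs]; linarith
  have hs1 : s ≤ 1 := by simp [hs]; linarith
  have h1 : (1+r)^s ≤ (1-r)^s + (2*r)^s := by
    have := LpUU_rpow_subadd hs0 hs1 (x := 1-r) (y := 2*r) (by linarith) (by linarith)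
    have e : (1-r) + 2*r = 1+r := by ring
    rwa [e] at this
  have h2 : (2*r)^s ≤ (r - r*r)^s + (r + r*r)^s := by
    have := LpUU_rpow_subadd hs0 hs1 (x := r - r*r) (y := r + r*r) (by nlinarith) (by nlinarith)
    have e : (r - r*r) + (r + r*r) = 2*r := by ring
    rwa [e] at this
  have e1 : (r - r*r)^s = r^s * (1-r)^s := by
    rw [← Real.mul_rpow hr0.le (by linarith)]; ring_nf
  have e2 : (r + r*r)^s = r^s * (1+r)^s := by
    rw [← Real.mul_rpow hr0.le (by linarith)]; ring_nf
  nlinarith [h1, h2, e1, e2]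

lemma LpUU_rpow_split {p x : ℝ} (hp : 1 < p) (hx : 0 ≤ x) : x ^ p = x ^ (p-1) * x := by
  rcases eq_or_lt_of_le hx with h | h
  · rw [← h, Real.zero_rpow (by linarith), Real.zero_rpow (by linarith), zero_mul]
  · have e : p - 1 + 1 = p := by ring
    conv_lhs => rw [← e]
    rw [Real.rpow_add h, Real.rpow_one]

lemma LpUU_k_nonneg {p t : ℝ} (hp1 : 1 < p) (hp2 : p ≤ 2) (ht0 : 0 ≤ t) (ht1 : t ≤ 1) :
    2*(p-1)*t ≤ (1+t)^(p-1) - (1-t)^(p-1) := by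
  set s := p - 1 with hs
  have hs0 : 0 < s := by simp [hs]; linarith
  have hs1 : s ≤ 1 := by simp [hs]; linarith
  set k : ℝ → ℝ := fun t => (1+t)^s - (1-t)^s - 2*s*t with hk
  have cont : Continuous k := by
    apply Continuous.sub
    apply Continuous.sub
    · exact (continuous_const.add continuous_id).rpow_const (fun x => Or.inr hs0.le)
    · exact (continuous_const.sub continuous_id).rpow_const (fun x => Or.inr hs0.le)
    · exact continuous_const.mul continuous_id
  have mono : MonotoneOn k (Set.Icc 0 1) := by
    apply monotoneOn_of_hasDerivWithinAt_nonneg (convex_Icc 0 1) cont.continuousOn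
      (f' := fun x => s*(1+x)^(s-1) + s*(1-x)^(s-1) - 2*s)
    · intro x hx
      rw [interior_Icc] at hx
      obtain ⟨hx0, hx1⟩ := hx
      have hb1 : HasDerivAt (fun t : ℝ => 1 + t) 1 x := by
        exact (hasDerivAt_id x).const_add 1
      have d1 : HasDerivAt (fun t : ℝ => (1+t)^s) (1 * s * (1+x)^(s-1)) x :=
        hb1.rpow_const (Or.inl (ne_of_gt (show (0:ℝ) < 1 + x by linarith)))
      have d2 : HasDerivAt (fun t : ℝ => (1-t)^s) ((-1) * s * (1-x)^(s-1)) x := by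
        have hb : HasDerivAt (fun t : ℝ => 1 - t) (-1) x := by
          exact (hasDerivAt_id x).const_sub 1
        exact hb.rpow_const (Or.inl (ne_of_gt (show (0:ℝ) < 1 - x by linarith)))
      have d3 : HasDerivAt (fun t : ℝ => 2*s*t) (2*s) x := by
        simpa using (hasDerivAt_id x).const_mul (2*s)
      have := (d1.sub d2).sub d3
      apply HasDerivAt.hasDerivWithinAt
      exact this.congr_deriv (by ring)
    · intro x hx
      rw [interior_Icc] at hx
      obtain ⟨hx0, hx1⟩ := hx
      set a := (1+x)^(s-1) with ha
      set b := (1-x)^(s-1) with hb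
      have hap : 0 < a := Real.rpow_pos_of_pos (by linarith) _
      have hbp : 0 < b := Real.rpow_pos_of_pos (by linarith) _
      have hab : 1 ≤ a * b := by
        rw [ha, hb, ← Real.mul_rpow (by linarith) (by linarith)]
        apply Real.one_le_rpow_of_pos_of_le_one_of_nonpos
        · nlinarith
        · nlinarith
        · linarith
      have h2 : 2 ≤ a + b := by nlinarith [sq_nonneg (a-1)]
      nlinarith
  have k0 : k 0 = 0 := by
    simp [hk, Real.one_rpow]
  have := mono (Set.mem_Icc.2 ⟨le_refl 0, zero_le_one⟩) (Set.mem_Icc.2 ⟨ht0, ht1⟩) ht0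
  rw [k0] at this
  simp only [hk] at this
  linarith

lemma LpUU_h {p t : ℝ} (hp1 : 1 < p) (hp2 : p ≤ 2) (ht0 : 0 ≤ t) (ht1 : t ≤ 1) :
    2 + p*(p-1)*t^2 ≤ (1+t)^p + (1-t)^p := by
  have hp0 : (0:ℝ) < p := by linarith
  set h : ℝ → ℝ := fun t => (1+t)^p + (1-t)^p - 2 - p*(p-1)*t^2 with hh
  have cont : Continuous h := by
    apply Continuous.sub
    apply Continuous.sub
    apply Continuous.add
    · exact (continuous_const.add continuous_id).rpow_const (fun x => Or.inr hp0.le)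
    · exact (continuous_const.sub continuous_id).rpow_const (fun x => Or.inr hp0.le)
    · exact continuous_const
    · exact continuous_const.mul (continuous_pow 2)
  have mono : MonotoneOn h (Set.Icc 0 1) := by
    apply monotoneOn_of_hasDerivWithinAt_nonneg (convex_Icc 0 1) cont.continuousOn
      (f' := fun x => p*(1+x)^(p-1) - p*(1-x)^(p-1) - 2*p*(p-1)*x)
    · intro x hx
      rw [interior_Icc] at hx
      obtain ⟨hx0, hx1⟩ := hx
      have hb1 : HasDerivAt (fun t : ℝ => 1 + t) 1 x := by
        exact (hasDerivAt_id x).const_add 1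
      have d1 : HasDerivAt (fun t : ℝ => (1+t)^p) (1 * p * (1+x)^(p-1)) x :=
        hb1.rpow_const (Or.inl (ne_of_gt (show (0:ℝ) < 1 + x by linarith)))
      have d2 : HasDerivAt (fun t : ℝ => (1-t)^p) ((-1) * p * (1-x)^(p-1)) x := by
        have hb : HasDerivAt (fun t : ℝ => 1 - t) (-1) x := by
          exact (hasDerivAt_id x).const_sub 1
        exact hb.rpow_const (Or.inl (ne_of_gt (show (0:ℝ) < 1 - x by linarith)))
      have d3 : HasDerivAt (fun t : ℝ => 2 + p*(p-1)*t^2) (p*(p-1)*(2*x)) x := by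
        have := ((hasDerivAt_pow 2 x).const_mul (p*(p-1))).const_add 2
        exact this.congr_deriv (by norm_num)
      have := (d1.add d2).sub d3
      apply HasDerivAt.hasDerivWithinAt
      have hhe : h = ((fun t : ℝ => (1+t)^p) + fun t => (1-t)^p) - fun t => 2 + p*(p-1)*t^2 := by
        ext t; simp only [hh, Pi.add_apply, Pi.sub_apply]; ring
      rw [hhe]
      exact this.congr_deriv (by ring)
    · intro x hx
      rw [interior_Icc] at hx
      obtain ⟨hx0, hx1⟩ := hx
      have := LpUU_k_nonneg hp1 hp2 hx0.le hx1.le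
      nlinarith
  have h0 : h 0 = 0 := by
    norm_num [hh, Real.one_rpow]
  have := mono (Set.mem_Icc.2 ⟨le_refl 0, zero_le_one⟩) (Set.mem_Icc.2 ⟨ht0, ht1⟩) ht0
  rw [h0] at this
  simp only [hh] at this
  linarith

lemma LpUU_G {p r t : ℝ} (hp1 : 1 < p) (hp2 : p ≤ 2)
    (hr0 : 0 < r) (hr1 : r ≤ 1) (ht0 : 0 ≤ t) (ht1 : t ≤ 1) :
    ((1+r)^(p-1) + (1-r)^(p-1)) + ((1+r)^(p-1) - (1-r)^(p-1))/r^(p-1) * t^p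
      ≤ (1+t)^p + (1-t)^p := by
  have hp0 : (0:ℝ) < p := by linarith
  have hrs : (0:ℝ) < r^(p-1) := Real.rpow_pos_of_pos hr0 _
  set al : ℝ := (1+r)^(p-1) + (1-r)^(p-1) with hal
  set be : ℝ := ((1+r)^(p-1) - (1-r)^(p-1))/r^(p-1) with hbe
  set G : ℝ → ℝ := fun t => (1+t)^p + (1-t)^p - al - be * t^p with hG
  have cont : Continuous G := by
    apply Continuous.sub
    apply Continuous.sub
    apply Continuous.add
    · exact (continuous_const.add continuous_id).rpow_const (fun x => Or.inr hp0.le)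
    · exact (continuous_const.sub continuous_id).rpow_const (fun x => Or.inr hp0.le)
    · exact continuous_const
    · exact continuous_const.mul (continuous_id.rpow_const (fun x => Or.inr hp0.le))
  -- derivative of G at x ∈ (0,1)
  have hasd : ∀ x : ℝ, 0 < x → x < 1 →
      HasDerivAt G (p*(1+x)^(p-1) - p*(1-x)^(p-1) - be * (p * x^(p-1))) x := by
    intro x hx0 hx1
    have hb1 : HasDerivAt (fun t : ℝ => 1 + t) 1 x := by
      exact (hasDerivAt_id x).const_add 1
    have d1 : HasDerivAt (fun t : ℝ => (1+t)^p) (1 * p * (1+x)^(p-1)) x :=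
      hb1.rpow_const (Or.inl (ne_of_gt (show (0:ℝ) < 1 + x by linarith)))
    have hb2 : HasDerivAt (fun t : ℝ => 1 - t) (-1) x := by
      exact (hasDerivAt_id x).const_sub 1
    have d2 : HasDerivAt (fun t : ℝ => (1-t)^p) ((-1) * p * (1-x)^(p-1)) x :=
      hb2.rpow_const (Or.inl (ne_of_gt (show (0:ℝ) < 1 - x by linarith)))
    have d3 : HasDerivAt (fun t : ℝ => al + be * t^p) (be * (p * x^(p-1))) x := by
      have hd : HasDerivAt (fun t : ℝ => t^p) (p * x^(p-1)) x :=
        Real.hasDerivAt_rpow_const (Or.inl (ne_of_gt hx0))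
      simpa using (hd.const_mul be).const_add al
    have := (d1.add d2).sub d3
    have hGe : G = ((fun t : ℝ => (1+t)^p) + fun t => (1-t)^p) - fun t => al + be * t^p := by
      ext u; simp only [hG, Pi.add_apply, Pi.sub_apply]; ring
    rw [hGe]
    exact this.congr_deriv (by ring)
  -- sign of derivative via beta monotonicity
  have dle : ∀ x : ℝ, 0 < x → x ≤ r → x < 1 →
      p*(1+x)^(p-1) - p*(1-x)^(p-1) - be * (p * x^(p-1)) ≤ 0 := by
    intro x hx0 hxr hx1
    have key := LpUU_beta_mono hp1 hp2 hx0 hxr hr1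
    have hxs : (0:ℝ) < x^(p-1) := Real.rpow_pos_of_pos hx0 _
    have : be * x^(p-1) ≥ (1+x)^(p-1) - (1-x)^(p-1) := by
      rw [hbe, div_mul_eq_mul_div, ge_iff_le, le_div_iff₀ hrs]
      linarith [key]
    nlinarith [this, hp0]
  have dge : ∀ x : ℝ, r ≤ x → x < 1 →
      0 ≤ p*(1+x)^(p-1) - p*(1-x)^(p-1) - be * (p * x^(p-1)) := by
    intro x hxr hx1
    have hx0 : 0 < x := lt_of_lt_of_le hr0 hxr
    have key := LpUU_beta_mono hp1 hp2 hr0 hxr hx1.le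
    have : be * x^(p-1) ≤ (1+x)^(p-1) - (1-x)^(p-1) := by
      rw [hbe, div_mul_eq_mul_div, div_le_iff₀ hrs]
      linarith [key]
    nlinarith [this, hp0]
  have anti : AntitoneOn G (Set.Icc 0 r) := by
    apply antitoneOn_of_hasDerivWithinAt_nonpos (convex_Icc 0 r) cont.continuousOn
      (f' := fun x => p*(1+x)^(p-1) - p*(1-x)^(p-1) - be * (p * x^(p-1)))
    · intro x hx
      rw [interior_Icc] at hx
      exact (hasd x hx.1 (lt_of_lt_of_le hx.2 hr1)).hasDerivWithinAt
    · intro x hx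
      rw [interior_Icc] at hx
      exact dle x hx.1 hx.2.le (lt_of_lt_of_le hx.2 hr1)
  have mono : MonotoneOn G (Set.Icc r 1) := by
    apply monotoneOn_of_hasDerivWithinAt_nonneg (convex_Icc r 1) cont.continuousOn
      (f' := fun x => p*(1+x)^(p-1) - p*(1-x)^(p-1) - be * (p * x^(p-1)))
    · intro x hx
      rw [interior_Icc] at hx
      exact (hasd x (lt_of_le_of_lt hr0.le hx.1) hx.2).hasDerivWithinAt
    · intro x hx
      rw [interior_Icc] at hx
      exact dge x hx.1.le hx.2
  have Gr : G r = 0 := by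
    have e1 : (1+r)^p = (1+r)^(p-1) * (1+r) := LpUU_rpow_split hp1 (by linarith)
    have e2 : (1-r)^p = (1-r)^(p-1) * (1-r) := LpUU_rpow_split hp1 (by linarith)
    have e3 : r^p = r^(p-1) * r := LpUU_rpow_split hp1 hr0.le
    simp only [hG, hbe, hal, e1, e2, e3]
    field_simp
    ring
  have hGt : 0 ≤ G t := by
    rcases le_total t r with h | h
    · have := anti (Set.mem_Icc.2 ⟨ht0, h⟩) (Set.mem_Icc.2 ⟨hr0.le, le_refl r⟩) h
      rw [Gr] at this; exact this
    · have := mono (Set.mem_Icc.2 ⟨le_refl r, hr1⟩) (Set.mem_Icc.2 ⟨h, ht1⟩) h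
      rw [Gr] at this; exact this
  simp only [hG] at hGt
  linarith

lemma LpUU_abs_id (p : ℝ) (a b : ℝ) :
    |a+b|^p + |a-b|^p = (|a|+|b|)^p + |(|a|-|b|)|^p := by
  rcases le_total 0 a with ha | ha <;> rcases le_total 0 b with hb | hb
  · rw [abs_of_nonneg ha, abs_of_nonneg hb, abs_of_nonneg (by linarith : (0:ℝ) ≤ a + b)]
  · rw [abs_of_nonneg ha, abs_of_nonpos hb,
      show a + -b = a - b by ring, show a - -b = a + b by ring,
      abs_of_nonneg (by linarith : (0:ℝ) ≤ a - b)]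
    ring
  · rw [abs_of_nonpos ha, abs_of_nonneg hb,
      show -a + b = -(a - b) by ring, show -a - b = -(a+b) by ring, abs_neg,
      abs_of_nonpos (by linarith : a - b ≤ 0)]
    ring
  · rw [abs_of_nonpos ha, abs_of_nonpos hb,
      show -a + -b = -(a+b) by ring, show -a - -b = -(a-b) by ring, abs_neg,
      abs_of_nonpos (by linarith : a + b ≤ 0)]

lemma LpUU_pointwise_nonneg {p r : ℝ} (hp1 : 1 < p) (hp2 : p ≤ 2)
    (hr0 : 0 < r) (hr1 : r ≤ 1) {A B : ℝ} (hA : 0 ≤ A) (hB : 0 ≤ B) (hBA : B ≤ A) :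
    ((1+r)^(p-1) + (1-r)^(p-1)) * A^p + ((1+r)^(p-1) - (1-r)^(p-1))/r^(p-1) * B^p
      ≤ (A+B)^p + (A-B)^p := by
  have hp0 : (0:ℝ) < p := by linarith
  rcases eq_or_lt_of_le hA with h0 | h0
  · have hB0 : B = 0 := le_antisymm (h0 ▸ hBA) hB
    rw [← h0, hB0]
    simp [Real.zero_rpow (ne_of_gt hp0)]
  · set al : ℝ := (1+r)^(p-1) + (1-r)^(p-1) with hal
    set be : ℝ := ((1+r)^(p-1) - (1-r)^(p-1))/r^(p-1) with hbe
    have ht0 : 0 ≤ B/A := div_nonneg hB h0.le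
    have ht1 : B/A ≤ 1 := (div_le_one h0).2 hBA
    have key := LpUU_G hp1 hp2 hr0 hr1 ht0 ht1
    have hAp : (0:ℝ) < A^p := Real.rpow_pos_of_pos h0 _
    have e1 : (1+B/A)^p * A^p = (A+B)^p := by
      rw [← Real.mul_rpow (by linarith) h0.le]
      congr 1
      field_simp
    have e2 : (1-B/A)^p * A^p = (A-B)^p := by
      rw [← Real.mul_rpow (by linarith [(div_le_one h0).2 hBA]) h0.le]
      congr 1
      field_simp
    have e3 : (B/A)^p * A^p = B^p := by
      rw [← Real.mul_rpow ht0 h0.le]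
      congr 1
      field_simp
    calc al * A^p + be * B^p = (al + be * (B/A)^p) * A^p := by rw [← e3]; ring
      _ ≤ ((1+B/A)^p + (1-B/A)^p) * A^p := mul_le_mul_of_nonneg_right key hAp.le
      _ = (A+B)^p + (A-B)^p := by rw [← e1, ← e2]; ring

lemma LpUU_pointwise {p r : ℝ} (hp1 : 1 < p) (hp2 : p ≤ 2)
    (hr0 : 0 < r) (hr1 : r ≤ 1) (a b : ℝ) :
    ((1+r)^(p-1) + (1-r)^(p-1)) * |a|^p + ((1+r)^(p-1) - (1-r)^(p-1))/r^(p-1) * |b|^p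
      ≤ |a+b|^p + |a-b|^p := by
  rw [LpUU_abs_id p a b]
  set A := |a| with hAd
  set B := |b| with hBd
  have hA : 0 ≤ A := abs_nonneg a
  have hB : 0 ≤ B := abs_nonneg b
  rcases le_total B A with h | h
  · rw [abs_of_nonneg (by linarith : (0:ℝ) ≤ A - B)]
    exact LpUU_pointwise_nonneg hp1 hp2 hr0 hr1 hA hB h
  · rw [abs_of_nonpos (by linarith : A - B ≤ 0), neg_sub]
    have base := LpUU_pointwise_nonneg hp1 hp2 hr0 hr1 hB hA h
    rw [add_comm B A] at base
    have hrs : (0:ℝ) < r^(p-1) := Real.rpow_pos_of_pos hr0 _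
    have hba : ((1+r)^(p-1) - (1-r)^(p-1))/r^(p-1) ≤ (1+r)^(p-1) + (1-r)^(p-1) := by
      rw [div_le_iff₀ hrs]
      have := LpUU_beta_le_alpha_aux hp1 hp2 hr0 hr1
      linarith [this]
    have hbe0 : 0 ≤ ((1+r)^(p-1) - (1-r)^(p-1))/r^(p-1) := by
      apply div_nonneg _ hrs.le
      have : (1-r)^(p-1) ≤ (1+r)^(p-1) :=
        Real.rpow_le_rpow (by linarith) (by linarith) (by linarith)
      linarith
    have hpw : A^p ≤ B^p := Real.rpow_le_rpow hA h (by linarith)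
    nlinarith [base, mul_nonneg (sub_nonneg.2 hba) (sub_nonneg.2 hpw)]

lemma LpUU_norm_rpow {α : Type*} [MeasurableSpace α] {μ : MeasureTheory.Measure α}
    {p : ℝ} (hp0 : 0 < p) [Fact (1 ≤ ENNReal.ofReal p)]
    (f : MeasureTheory.Lp ℝ (ENNReal.ofReal p) μ) :
    ‖f‖ ^ p = ∫ a, |f a| ^ p ∂μ := by
  have hP0 : ENNReal.ofReal p ≠ 0 := ne_of_gt (ENNReal.ofReal_pos.2 hp0)
  have hPt : ENNReal.ofReal p ≠ ⊤ := ENNReal.ofReal_ne_top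
  have hPr : (ENNReal.ofReal p).toReal = p := ENNReal.toReal_ofReal hp0.le
  have hm := MeasureTheory.Lp.memLp f
  have hint : 0 ≤ ∫ a, ‖f a‖ ^ p ∂μ :=
    MeasureTheory.integral_nonneg fun a => Real.rpow_nonneg (norm_nonneg _) _
  rw [MeasureTheory.Lp.norm_def, hm.eLpNorm_eq_integral_rpow_norm hP0 hPt]
  simp only [hPr]
  rw [ENNReal.toReal_ofReal (Real.rpow_nonneg hint _)]
  rw [← Real.rpow_mul hint, inv_mul_cancel₀ (ne_of_gt hp0), Real.rpow_one]
  simp [Real.norm_eq_abs]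

lemma LpUU_integral {α : Type*} [MeasurableSpace α] (μ : MeasureTheory.Measure α)
    {p : ℝ} (hp1 : 1 < p) (hp2 : p ≤ 2) [Fact (1 ≤ ENNReal.ofReal p)]
    {c d : ℝ} (hc : 0 ≤ c) (hd : 0 ≤ d)
    (hpt : ∀ a b : ℝ, c * |a|^p + d * |b|^p ≤ |a+b|^p + |a-b|^p)
    (f g : MeasureTheory.Lp ℝ (ENNReal.ofReal p) μ) :
    c * ‖f‖^p + d * ‖g‖^p ≤ ‖f+g‖^p + ‖f-g‖^p := by
  have hp0 : (0:ℝ) < p := by linarith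
  have hP0 : ENNReal.ofReal p ≠ 0 := ne_of_gt (ENNReal.ofReal_pos.2 hp0)
  have hPt : ENNReal.ofReal p ≠ ⊤ := ENNReal.ofReal_ne_top
  have hPr : (ENNReal.ofReal p).toReal = p := ENNReal.toReal_ofReal hp0.le
  have hif : MeasureTheory.Integrable (fun a => |f a| ^ p) μ := by
    have := (MeasureTheory.Lp.memLp f).integrable_norm_rpow hP0 hPt
    simpa [hPr, Real.norm_eq_abs] using this
  have hig : MeasureTheory.Integrable (fun a => |g a| ^ p) μ := by
    have := (MeasureTheory.Lp.memLp g).integrable_norm_rpow hP0 hPt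
    simpa [hPr, Real.norm_eq_abs] using this
  have hifg : MeasureTheory.Integrable (fun a => |(f+g) a| ^ p) μ := by
    have := (MeasureTheory.Lp.memLp (f+g)).integrable_norm_rpow hP0 hPt
    simpa [hPr, Real.norm_eq_abs] using this
  have hifmg : MeasureTheory.Integrable (fun a => |(f-g) a| ^ p) μ := by
    have := (MeasureTheory.Lp.memLp (f-g)).integrable_norm_rpow hP0 hPt
    simpa [hPr, Real.norm_eq_abs] using this
  calc c * ‖f‖^p + d * ‖g‖^p
      = ∫ a, (c * |f a|^p + d * |g a|^p) ∂μ := by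
        rw [LpUU_norm_rpow hp0 f, LpUU_norm_rpow hp0 g,
          ← MeasureTheory.integral_const_mul, ← MeasureTheory.integral_const_mul,
          ← MeasureTheory.integral_add (hif.const_mul c) (hig.const_mul d)]
    _ ≤ ∫ a, (|(f+g) a|^p + |(f-g) a|^p) ∂μ := by
        apply MeasureTheory.integral_mono_ae ((hif.const_mul c).add (hig.const_mul d))
          (hifg.add hifmg)
        filter_upwards [MeasureTheory.Lp.coeFn_add f g, MeasureTheory.Lp.coeFn_sub f g]
          with a h1 h2
        simp only [Pi.add_apply, Pi.sub_apply] at h1 h2 ⊢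
        rw [h1, h2]
        exact hpt (f a) (g a)
    _ = ‖f+g‖^p + ‖f-g‖^p := by
        rw [MeasureTheory.integral_add hifg hifmg, LpUU_norm_rpow hp0 (f+g),
          LpUU_norm_rpow hp0 (f-g)]

lemma LpUU_conv {α : Type*} [MeasurableSpace α] (μ : MeasureTheory.Measure α)
    {p : ℝ} (hp1 : 1 < p) (hp2 : p ≤ 2) [Fact (1 ≤ ENNReal.ofReal p)]
    {R ε : ℝ} (hR : 0 < R) (hε : 0 < ε)
    (u v : MeasureTheory.Lp ℝ (ENNReal.ofReal p) μ)
    (hu : ‖u‖ ≤ R) (hv : ‖v‖ ≤ R) (huv : ε ≤ ‖u - v‖) :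
    ‖(2⁻¹ : ℝ) • (u + v)‖ ≤ R - (p-1)*ε^2/(8*R) := by
  have hp0 : (0:ℝ) < p := by linarith
  have hε2R : ε ≤ 2*R := by
    have := norm_sub_le u v
    linarith
  obtain ⟨r, hrdef⟩ : ∃ r : ℝ, r = ε/(2*R) := ⟨_, rfl⟩
  have hr0 : 0 < r := by rw [hrdef]; exact div_pos hε (by linarith)
  have hr1 : r ≤ 1 := by rw [hrdef]; exact (div_le_one (by linarith)).2 hε2R
  obtain ⟨s, hs⟩ : ∃ s : ℝ, s = p - 1 := ⟨_, rfl⟩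
  have hs0 : (0:ℝ) ≤ s := by rw [hs]; linarith
  have hs1 : s ≤ 1 := by rw [hs]; linarith
  obtain ⟨al, hal⟩ : ∃ al : ℝ, al = (1+r)^s + (1-r)^s := ⟨_, rfl⟩
  obtain ⟨be, hbe⟩ : ∃ be : ℝ, be = ((1+r)^s - (1-r)^s)/r^s := ⟨_, rfl⟩
  have hrs : (0:ℝ) < r^s := Real.rpow_pos_of_pos hr0 _
  have hbe0 : 0 ≤ be := by
    rw [hbe]
    apply div_nonneg _ hrs.le
    have : (1-r)^s ≤ (1+r)^s :=
      Real.rpow_le_rpow (by linarith) (by linarith) hs0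
    linarith
  have hal2 : al ≤ 2 := by
    rw [hal, hs]
    exact LpUU_alpha_le_two hp1 hp2 hr0.le hr1
  have hal0 : 0 < al := by
    have h1 : (0:ℝ) < (1+r)^s := Real.rpow_pos_of_pos (by linarith) _
    have h2 : (0:ℝ) ≤ (1-r)^s := Real.rpow_nonneg (by linarith) _
    rw [hal]; linarith
  obtain ⟨f, hfd⟩ : ∃ f, f = (2⁻¹ : ℝ) • (u + v) := ⟨_, rfl⟩
  obtain ⟨g, hgd⟩ : ∃ g, g = (2⁻¹ : ℝ) • (u - v) := ⟨_, rfl⟩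
  have hfg : f + g = u := by rw [hfd, hgd]; module
  have hfmg : f - g = v := by rw [hfd, hgd]; module
  have hptw : ∀ a b : ℝ, al * |a|^p + be * |b|^p ≤ |a+b|^p + |a-b|^p := by
    intro a b
    rw [hal, hbe, hs]
    exact LpUU_pointwise hp1 hp2 hr0 hr1 a b
  have key := LpUU_integral μ hp1 hp2 hal0.le hbe0 hptw f g
  rw [hfg, hfmg] at key
  have hA0 : 0 ≤ ‖f‖ := norm_nonneg _
  have hBval : ε/2 ≤ ‖g‖ := by
    rw [hgd, norm_smul]
    simp only [norm_inv, Real.norm_ofNat]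
    linarith [huv]
  have h2R : ‖u‖^p + ‖v‖^p ≤ 2*R^p := by
    have h1 : ‖u‖^p ≤ R^p := Real.rpow_le_rpow (norm_nonneg _) hu hp0.le
    have h2 : ‖v‖^p ≤ R^p := Real.rpow_le_rpow (norm_nonneg _) hv hp0.le
    linarith
  have hrR : r * R = ε/2 := by
    rw [hrdef]; field_simp
  have hBp : (r*R)^p ≤ ‖g‖^p := by
    apply Real.rpow_le_rpow (by positivity) _ hp0.le
    rw [hrR]; exact hBval
  have hmain : al * ‖f‖^p + be * ((r*R)^p) ≤ 2*R^p := by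
    have := mul_le_mul_of_nonneg_left hBp hbe0
    linarith [key, h2R]
  have ebr : be * r^p = (1+r)^p + (1-r)^p - al := by
    have e1 : (1+r)^p = (1+r)^s * (1+r) := by
      rw [hs]; exact LpUU_rpow_split hp1 (by linarith)
    have e2 : (1-r)^p = (1-r)^s * (1-r) := by
      rw [hs]; exact LpUU_rpow_split hp1 (by linarith)
    have e3 : r^p = r^s * r := by
      rw [hs]; exact LpUU_rpow_split hp1 hr0.le
    rw [hbe, hal, e1, e2, e3]
    field_simp
    ring
  have hh : 2 + p*s*r^2 ≤ (1+r)^p + (1-r)^p := by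
    rw [hs]
    exact LpUU_h hp1 hp2 hr0.le hr1
  have hbr : 2 + p*s*r^2 - al ≤ be * r^p := by
    rw [ebr]; linarith
  have hsplitrR : (r*R)^p = r^p * R^p := Real.mul_rpow hr0.le hR.le
  have hRp : (0:ℝ) < R^p := Real.rpow_pos_of_pos hR _
  have step1 : al * ‖f‖^p ≤ (al - p*s*r^2) * R^p := by
    have hlow : (2 + p*s*r^2 - al) * R^p ≤ be * ((r*R)^p) := by
      rw [hsplitrR, ← mul_assoc]
      exact mul_le_mul_of_nonneg_right hbr hRp.le
    have expand : (2 + p*s*r^2 - al)*R^p = 2*R^p - (al - p*s*r^2)*R^p := by ring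
    linarith [hmain, hlow, expand]
  obtain ⟨w, hw⟩ : ∃ w : ℝ, w = s*r^2/2 := ⟨_, rfl⟩
  have hw0 : 0 ≤ w := by
    rw [hw]; positivity
  have hw12 : w ≤ 1/2 := by
    have hr2 : r^2 ≤ 1 := pow_le_one₀ hr0.le hr1
    have := mul_le_one₀ hs1 (sq_nonneg r) hr2
    rw [hw]; linarith
  have bern : 1 - p*w ≤ (1-w)^p := by
    have := one_add_mul_self_le_rpow_one_add (s := -w) (by linarith) hp1.le
    have e : (1:ℝ) + -w = 1 - w := by ring
    rw [e] at this
    linarith [this]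
  have step2 : al * ‖f‖^p ≤ al * ((1-w)*R)^p := by
    have hmr : ((1-w)*R)^p = (1-w)^p * R^p := Real.mul_rpow (by linarith) hR.le
    have h1 : al - p*s*r^2 ≤ al * (1-w)^p := by
      have h2 : al - 2*p*w ≤ al * (1 - p*w) := by
        have hx : 0 ≤ p*w*(2 - al) := mul_nonneg (mul_nonneg hp0.le hw0) (by linarith)
        have hkey : al*(1 - p*w) - (al - 2*p*w) = p*w*(2-al) := by ring
        linarith
      have h3 : al * (1 - p*w) ≤ al * (1-w)^p :=
        mul_le_mul_of_nonneg_left bern hal0.le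
      have h4 : p*s*r^2 = 2*p*w := by rw [hw]; ring
      linarith
    calc al * ‖f‖^p ≤ (al - p*s*r^2) * R^p := step1
      _ ≤ (al * (1-w)^p) * R^p := mul_le_mul_of_nonneg_right h1 hRp.le
      _ = al * ((1-w)*R)^p := by rw [hmr]; ring
  have step3 : ‖f‖ ≤ (1-w)*R := by
    have hAp : ‖f‖^p ≤ ((1-w)*R)^p := le_of_mul_le_mul_left step2 hal0
    have h0 : (0:ℝ) ≤ (1-w)*R := mul_nonneg (by linarith) hR.le
    exact (Real.rpow_le_rpow_iff hA0 h0 hp0).1 hAp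
  have final : (1-w)*R = R - (p-1)*ε^2/(8*R) := by
    rw [hw, hs, hrdef]
    field_simp
    ring
  rw [← hfd]
  linarith [step3, final.le]

/-- For `1 < p ≤ 2`, `Φ(ε,b) = ((p-1)/8) * ε² / (b+ε)` is a modulus of uniform uniqueness
for any `L_p` space over a measurable space. -/
theorem Lp_uniformUniqueness_modulus {α : Type*} [MeasurableSpace α]
    (μ : MeasureTheory.Measure α) (p : ℝ) (hp1 : 1 < p) (hp2 : p ≤ 2)
    [Fact (1 ≤ ENNReal.ofReal p)] :
    ∀ ε > (0:ℝ), ∀ b > (0:ℝ),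
      ∀ x y z : MeasureTheory.Lp ℝ (ENNReal.ofReal p) μ,
        ∀ r₁ ∈ Set.Ioc (0:ℝ) b, ∀ r₂ ∈ Set.Ioc (0:ℝ) b,
          dist z x ≤ r₁ → dist z y ≤ r₂ + (p - 1) / 8 * ε ^ 2 / (b + ε) →
            r₁ + r₂ ≤ dist x y →
              Metric.infDist z (segment ℝ x y) < ε := by
  intro ε hε b hb x y z r₁ hr₁ r₂ hr₂ h1 h2 h3
  obtain ⟨hr₁0, hr₁b⟩ := hr₁
  obtain ⟨hr₂0, hr₂b⟩ := hr₂
  obtain ⟨Φ, hΦdef⟩ : ∃ Φ : ℝ, Φ = (p - 1) / 8 * ε ^ 2 / (b + ε) := ⟨_, rfl⟩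
  rw [← hΦdef] at h2
  have hbε : (0:ℝ) < b + ε := by linarith
  have hΦ0 : 0 ≤ Φ := by
    rw [hΦdef]
    apply div_nonneg _ hbε.le
    apply mul_nonneg _ (sq_nonneg ε)
    linarith
  have hΦε : Φ < ε := by
    rw [hΦdef, div_lt_iff₀ hbε]
    nlinarith [sq_nonneg ε, hε, hb, hp2]
  have hd0 : (0:ℝ) < dist x y := lt_of_lt_of_le (by linarith) h3
  have hr₁d : r₁ ≤ dist x y := by linarith
  obtain ⟨m, hmdef⟩ : ∃ m, m = x + (r₁ / dist x y) • (y - x) := ⟨_, rfl⟩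
  have hm : m ∈ segment ℝ x y := by
    rw [segment_eq_image', hmdef]
    exact ⟨r₁ / dist x y, ⟨div_nonneg hr₁0.le hd0.le, (div_le_one hd0).2 hr₁d⟩, rfl⟩
  have hseg : Metric.infDist z (segment ℝ x y) ≤ dist z m :=
    Metric.infDist_le_dist_of_mem hm
  by_contra hcon
  push_neg at hcon
  have hzm : ε ≤ dist z m := le_trans hcon hseg
  obtain ⟨R, hRdef⟩ : ∃ R : ℝ, R = r₂ + Φ := ⟨_, rfl⟩
  have hR0 : 0 < R := by rw [hRdef]; linarith
  have hmx : ‖m - x‖ = r₁ := by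
    have e : m - x = (r₁ / dist x y) • (y - x) := by rw [hmdef]; module
    rw [e, norm_smul, Real.norm_eq_abs, abs_of_nonneg (div_nonneg hr₁0.le hd0.le)]
    have : ‖y - x‖ = dist x y := by rw [← dist_eq_norm, dist_comm]
    rw [this]
    field_simp
  have hmy : ‖m - y‖ = dist x y - r₁ := by
    have e : m - y = (1 - r₁ / dist x y) • (x - y) := by rw [hmdef]; module
    rw [e, norm_smul, Real.norm_eq_abs,
      abs_of_nonneg (by linarith [(div_le_one hd0).2 hr₁d] : (0:ℝ) ≤ 1 - r₁ / dist x y)]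
    have : ‖x - y‖ = dist x y := by rw [← dist_eq_norm]
    rw [this, sub_mul, one_mul, div_mul_cancel₀ _ (ne_of_gt hd0)]
  have hdxy : dist x y ≤ r₁ + dist z y := by
    have := dist_triangle x z y
    have hxz : dist x z = dist z x := dist_comm x z
    linarith
  have hu : ‖z - y‖ ≤ R := by
    rw [← dist_eq_norm, hRdef]
    exact h2
  have hvR : ‖m - y‖ ≤ R := by
    rw [hmy, hRdef]
    have hzy : dist z y ≤ r₂ + Φ := h2
    linarith
  have huv : ε ≤ ‖(z - y) - (m - y)‖ := by
    have e : (z - y) - (m - y) = z - m := by module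
    rw [e, ← dist_eq_norm]
    exact hzm
  have conv := LpUU_conv μ hp1 hp2 hR0 hε (z - y) (m - y) hu hvR huv
  -- lower bound on the midpoint distance
  have hlow : dist x y - r₁ ≤ ‖(2⁻¹ : ℝ) • ((z - y) + (m - y))‖ := by
    obtain ⟨q, hqdef⟩ : ∃ q, q = (2⁻¹ : ℝ) • (z + m) := ⟨_, rfl⟩
    have e : (2⁻¹ : ℝ) • ((z - y) + (m - y)) = q - y := by rw [hqdef]; module
    have hqx : ‖q - x‖ ≤ r₁ := by
      have e2 : q - x = (2⁻¹ : ℝ) • ((z - x) + (m - x)) := by rw [hqdef]; module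
      rw [e2, norm_smul]
      simp only [norm_inv, Real.norm_ofNat]
      have h4 : ‖(z - x) + (m - x)‖ ≤ ‖z - x‖ + ‖m - x‖ := norm_add_le _ _
      have h5 : ‖z - x‖ ≤ r₁ := by rw [← dist_eq_norm]; exact h1
      rw [hmx] at h4
      calc 2⁻¹ * ‖(z-x) + (m-x)‖ ≤ 2⁻¹ * (r₁ + r₁) := by linarith
        _ = r₁ := by ring
    have htri : dist x y ≤ ‖q - x‖ + ‖q - y‖ := by
      have := dist_triangle x q y
      simp only [dist_eq_norm] at this
      have e3 : ‖x - q‖ = ‖q - x‖ := norm_sub_rev x q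
      rw [dist_eq_norm]
      linarith
    rw [e]
    linarith
  have hr₂low : r₂ ≤ ‖(2⁻¹ : ℝ) • ((z - y) + (m - y))‖ := by linarith
  -- contradiction
  have hRb : R < b + ε := by
    rw [hRdef]
    linarith
  have hN : (0:ℝ) < (p-1) * ε^2 := by
    apply mul_pos (by linarith) (by positivity)
  have hΦform : Φ = (p-1) * ε^2 / (8 * (b + ε)) := by
    rw [hΦdef]; field_simp
  have hstrict : Φ < (p-1)*ε^2/(8*R) := by
    rw [hΦform]
    apply div_lt_div_of_pos_left hN (by linarith) (by linarith)
  have : r₂ ≤ R - (p-1)*ε^2/(8*R) := le_trans hr₂low conv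
  rw [hRdef] at this
  linarith
end

section
/- In any uniquely geodesic space X in which the distance function is convex (i.e., d(z,(1−t)x+ty) ≤ (1−t)d(z,x)+t·d(z,y) for all x,y,z and t∈[0,1]), the betweenness property holds: for pairwise distinct x,y,z,w∈X, if y∈[x,z] and z∈[y,w], then y,z∈[x,w]. -/
open Metric Set

private lemma seg_dist_param {X : Type*} [MetricSpace X] {x z : X} {γ : ℝ → X}
    (hγ : IsGeodesic x z γ) {s : ℝ} (hs : s ∈ Set.Icc (0:ℝ) (dist x z)) :
    dist x (γ s) = s ∧ dist (γ s) z = dist x z - s := by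
  obtain ⟨h0, hd, hiso⟩ := hγ
  have h0I : (0:ℝ) ∈ Set.Icc (0:ℝ) (dist x z) := ⟨le_refl _, dist_nonneg⟩
  have hdI : dist x z ∈ Set.Icc (0:ℝ) (dist x z) := ⟨dist_nonneg, le_refl _⟩
  constructor
  · have := hiso 0 h0I s hs
    rw [h0] at this
    rw [this, abs_of_nonpos (by linarith [hs.1])]; ring
  · have := hiso s hs (dist x z) hdI
    rw [hd] at this
    rw [this, abs_of_nonpos (by linarith [hs.2])]; ring

private lemma seg_sum {X : Type*} [MetricSpace X] {seg : X → X → Set X}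
    (hseg : IsSegSystem seg) {x z y : X} (hy : y ∈ seg x z) :
    dist x y + dist y z = dist x z := by
  obtain ⟨γ, hγ, hs⟩ := hseg x z
  rw [hs] at hy
  obtain ⟨s, hsI, rfl⟩ := hy
  obtain ⟨h1, h2⟩ := seg_dist_param hγ hsI
  rw [h1, h2]; ring

private lemma seg_point_unique {X : Type*} [MetricSpace X] {seg : X → X → Set X}
    (hseg : IsSegSystem seg) {x z p q : X} (hp : p ∈ seg x z) (hq : q ∈ seg x z)
    (h : dist x p = dist x q) : p = q := by
  obtain ⟨γ, hγ, hs⟩ := hseg x z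
  rw [hs] at hp hq
  obtain ⟨s, hsI, rfl⟩ := hp
  obtain ⟨t, htI, rfl⟩ := hq
  rw [(seg_dist_param hγ hsI).1, (seg_dist_param hγ htI).1] at h
  rw [h]

private lemma between_mem_seg {X : Type*} [MetricSpace X] (huniq : UniquelyGeodesic X)
    {seg : X → X → Set X} (hseg : IsSegSystem seg) {x p w : X}
    (heq : dist x p + dist p w = dist x w) : p ∈ seg x w := by
  obtain ⟨γ₃, h₃, hsimg⟩ := hseg x w
  by_cases hxp : p = x
  · subst hxp
    rw [hsimg]
    exact ⟨0, ⟨le_refl _, dist_nonneg⟩, h₃.1⟩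
  by_cases hpw : p = w
  · subst hpw
    rw [hsimg]
    exact ⟨dist x p, ⟨dist_nonneg, le_refl _⟩, h₃.2.1⟩
  obtain ⟨γ₁, h₁⟩ := (huniq x p).1
  obtain ⟨γ₂, h₂⟩ := (huniq p w).1
  have ha : 0 < dist x p := dist_pos.2 (fun h => hxp h.symm)
  have hc : 0 < dist p w := dist_pos.2 hpw
  set a := dist x p with hadef
  set c := dist p w with hcdef
  set γ : ℝ → X := fun s => if s ≤ a then γ₁ s else γ₂ (s - a) with hγdef
  -- distance facts for γ₁ and γ₂
  have f1 : ∀ s ∈ Set.Icc (0:ℝ) a, dist x (γ₁ s) = s ∧ dist (γ₁ s) p = a - s :=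
    fun s hs => seg_dist_param h₁ hs
  have f2 : ∀ s ∈ Set.Icc (0:ℝ) c, dist p (γ₂ s) = s ∧ dist (γ₂ s) w = c - s :=
    fun s hs => seg_dist_param h₂ hs
  have key : ∀ s ∈ Set.Icc (0:ℝ) (dist x w), ∀ t ∈ Set.Icc (0:ℝ) (dist x w),
      s ≤ t → dist (γ s) (γ t) = t - s := by
    intro s hs t ht hst
    rw [← heq] at hs ht
    by_cases hta : t ≤ a
    · have hsa : s ≤ a := le_trans hst hta
      have : dist (γ₁ s) (γ₁ t) = |s - t| :=
        h₁.2.2 s ⟨hs.1, hsa⟩ t ⟨le_trans hs.1 hst, hta⟩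
      simp only [hγdef, if_pos hsa, if_pos hta]
      rw [this, abs_of_nonpos (by linarith)]; ring
    · push_neg at hta
      have htI : t - a ∈ Set.Icc (0:ℝ) c := ⟨by linarith, by linarith [ht.2]⟩
      by_cases hsa : s ≤ a
      · -- mixed case
        simp only [hγdef, if_pos hsa, if_neg (not_le.2 hta)]
        have d1 : dist x (γ₁ s) = s := (f1 s ⟨hs.1, hsa⟩).1
        have d2 : dist (γ₁ s) p = a - s := (f1 s ⟨hs.1, hsa⟩).2
        have d3 : dist p (γ₂ (t - a)) = t - a := (f2 _ htI).1
        have d4 : dist (γ₂ (t - a)) w = c - (t - a) := (f2 _ htI).2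
        have hle : dist (γ₁ s) (γ₂ (t - a)) ≤ t - s := by
          calc dist (γ₁ s) (γ₂ (t - a)) ≤ dist (γ₁ s) p + dist p (γ₂ (t - a)) :=
                dist_triangle _ _ _
            _ = t - s := by rw [d2, d3]; ring
        have hge : t - s ≤ dist (γ₁ s) (γ₂ (t - a)) := by
          have htr : dist x w ≤ dist x (γ₁ s) + dist (γ₁ s) (γ₂ (t - a)) +
              dist (γ₂ (t - a)) w := dist_triangle4 _ _ _ _
          rw [← heq, d1, d4] at htr
          linarith
        linarith
      · push_neg at hsa
        have hsI : s - a ∈ Set.Icc (0:ℝ) c := ⟨by linarith, by linarith [hs.2]⟩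
        have : dist (γ₂ (s - a)) (γ₂ (t - a)) = |s - a - (t - a)| :=
          h₂.2.2 _ hsI _ htI
        simp only [hγdef, if_neg (not_le.2 hsa), if_neg (not_le.2 hta)]
        rw [this, abs_of_nonpos (by linarith)]; ring
  have hgeo : IsGeodesic x w γ := by
    refine ⟨?_, ?_, ?_⟩
    · simp only [hγdef, if_pos (le_of_lt ha)]
      exact h₁.1
    · have : ¬ (dist x w ≤ a) := by rw [← heq]; push_neg; linarith
      simp only [hγdef, if_neg this]
      have : dist x w - a = c := by rw [← heq]; ring
      rw [this]
      exact h₂.2.1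
    · intro s hs t ht
      rcases le_total s t with h | h
      · rw [key s hs t ht h, abs_of_nonpos (by linarith)]; ring
      · rw [dist_comm, key t ht s hs h, abs_of_nonneg (by linarith)]
  have heqon := (huniq x w).2 γ γ₃ hgeo h₃
  have haI : a ∈ Set.Icc (0:ℝ) (dist x w) := ⟨le_of_lt ha, by rw [← heq]; linarith⟩
  have hpa : γ a = p := by
    simp only [hγdef, if_pos (le_refl a)]
    exact h₁.2.1
  rw [hsimg]
  exact ⟨a, haI, by rw [← heqon haI, hpa]⟩

/-- In a uniquely geodesic space whose distance function is convex, the betweenness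
property holds. -/
theorem convexDist_betweenness {X : Type*} [MetricSpace X]
    (huniq : UniquelyGeodesic X) (seg : X → X → Set X) (hseg : IsSegSystem seg)
    (comb : ℝ → X → X → X) (hcomb : IsCombSystem seg comb)
    (hconv : ∀ x y z : X, ∀ t ∈ Set.Icc (0:ℝ) 1,
      dist z (comb t x y) ≤ (1 - t) * dist z x + t * dist z y) :
    ∀ x y z w : X, x ≠ y → x ≠ z → x ≠ w → y ≠ z → y ≠ w → z ≠ w →
      y ∈ seg x z → z ∈ seg y w → y ∈ seg x w ∧ z ∈ seg x w := by
  intro x y z w hxy hxz hxw hyz hyw hzw hyseg hzseg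
  have hA : 0 < dist x y := dist_pos.2 hxy
  have hB : 0 < dist y z := dist_pos.2 hyz
  have hC : 0 < dist z w := dist_pos.2 hzw
  have hxzsum : dist x y + dist y z = dist x z := seg_sum hseg hyseg
  have hywsum : dist y z + dist z w = dist y w := seg_sum hseg hzseg
  set A := dist x y
  set B := dist y z
  set C := dist z w
  have hYW : dist y w = B + C := hywsum.symm
  have hYWpos : (0:ℝ) < B + C := by linarith
  set t := B / (B + C) with htdef
  have htI : t ∈ Set.Icc (0:ℝ) 1 := by
    constructor
    · exact div_nonneg hB.le hYWpos.le
    · rw [div_le_one hYWpos]; linarith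
  obtain ⟨hmem, hd1, _⟩ := hcomb t htI y w
  have hcombz : comb t y w = z := by
    apply seg_point_unique hseg hmem hzseg
    rw [dist_comm y (comb t y w), hd1, hYW, htdef]
    exact div_mul_cancel₀ B hYWpos.ne'
  have hconvx := hconv y w x t htI
  rw [hcombz] at hconvx
  -- dist x z ≤ (1 - t) * dist x y + t * dist x w
  have hdxz : dist x z = A + B := hxzsum.symm
  have hW : dist x w = A + B + C := by
    have hub : dist x w ≤ A + B + C := by
      calc dist x w ≤ dist x y + dist y w := dist_triangle _ _ _
        _ = A + B + C := by rw [hYW]; ring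
    have hmul := mul_le_mul_of_nonneg_right hconvx hYWpos.le
    rw [hdxz, htdef] at hmul
    have hexp : ((1 - B / (B + C)) * A + B / (B + C) * dist x w) * (B + C)
        = C * A + B * dist x w := by
      field_simp
      ring
    rw [hexp] at hmul
    nlinarith
  constructor
  · exact between_mem_seg huniq hseg (by rw [hW, hYW]; try ring)
  · exact between_mem_seg huniq hseg (by rw [hW, ← hdxz]; try ring)
end

section
/- Let (X,d) be a uniformly uniquely geodesic space with a modulus of uniform uniqueness Φ satisfying Φ(ε,b)<ε for all ε,b>0. Let ε,b>0 and x,y,z∈X with max{d(x,y),d(x,z)}≤b and d(y,z)≤(1/2)Φ(ε,b). Then for all t∈[0,1], max{dist(yₜ,[x,z]), dist(zₜ,[x,y])} < ε, where yₜ=(1−t)x+ty and zₜ=(1−t)x+tz. -/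
open Metric Set

lemma close_geodesics_aux {X : Type*} [MetricSpace X]
    (seg : X → X → Set X) (hseg : IsSegSystem seg)
    (comb : ℝ → X → X → X) (hcomb : IsCombSystem seg comb)
    (Φ : ℝ → ℝ → ℝ) (hΦlt : ∀ ε > (0:ℝ), ∀ b > (0:ℝ), Φ ε b < ε)
    (hΦ : UniqModulus seg Φ)
    (ε b : ℝ) (hε : 0 < ε) (hb : 0 < b) (x y z : X)
    (hxy : dist x y ≤ b) (hxz : dist x z ≤ b) (hyz : dist y z ≤ Φ ε b / 2)
    (t : ℝ) (ht : t ∈ Set.Icc (0:ℝ) 1) :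
    Metric.infDist (comb t x y) (seg x z) < ε := by
  obtain ⟨γ, hγ, hγset⟩ := hseg x z
  have hxmem : x ∈ seg x z := by
    rw [hγset]; exact ⟨0, ⟨le_refl _, dist_nonneg⟩, hγ.1⟩
  have hzmem : z ∈ seg x z := by
    rw [hγset]; exact ⟨dist x z, ⟨dist_nonneg, le_refl _⟩, hγ.2.1⟩
  obtain ⟨_, hpx, hpy⟩ := hcomb t ht x y
  set p := comb t x y with hp
  have hdyz : (0:ℝ) ≤ dist y z := dist_nonneg
  have hdxy : (0:ℝ) ≤ dist x y := dist_nonneg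
  have h1 : dist p z ≤ (1 - t) * dist x y + dist y z := by
    rw [← hpy]; exact dist_triangle p y z
  have h2 : dist x y ≤ dist x z + dist y z := by
    have := dist_triangle x z y; rwa [dist_comm z y] at this
  rcases le_or_gt (dist x z) (t * dist x y) with hcase | hcase
  · calc Metric.infDist p (seg x z) ≤ dist p z :=
          Metric.infDist_le_dist_of_mem hzmem
      _ ≤ Φ ε b := by nlinarith
      _ < ε := hΦlt ε hε b hb
  · rcases eq_or_lt_of_le (mul_nonneg ht.1 hdxy) with h0 | h0
    · calc Metric.infDist p (seg x z) ≤ dist p x :=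
          Metric.infDist_le_dist_of_mem hxmem
        _ = 0 := by rw [hpx, ← h0]
        _ < ε := hε
    · have htd : t * dist x y ≤ dist x y := by nlinarith [ht.2]
      have hr1 : t * dist x y ∈ Set.Ioc (0:ℝ) b := ⟨h0, le_trans htd hxy⟩
      have hr2 : dist x z - t * dist x y ∈ Set.Ioc (0:ℝ) b :=
        ⟨by linarith, by linarith⟩
      exact hΦ ε hε b hb x z p _ hr1 _ hr2 (le_of_eq hpx)
        (by linarith) (by linarith)

/-- If `d(y,z) ≤ Φ(ε,b)/2` and `x` is within distance `b` of `y` and `z`, then the points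
`yₜ = (1-t)x + ty` and `zₜ = (1-t)x + tz` satisfy
`dist(yₜ,[x,z]) < ε` and `dist(zₜ,[x,y]) < ε`. -/
theorem close_geodesics_lemma {X : Type*} [MetricSpace X]
    (huniq : UniquelyGeodesic X) (seg : X → X → Set X) (hseg : IsSegSystem seg)
    (comb : ℝ → X → X → X) (hcomb : IsCombSystem seg comb)
    (Φ : ℝ → ℝ → ℝ) (hΦlt : ∀ ε > (0:ℝ), ∀ b > (0:ℝ), Φ ε b < ε)
    (hΦ : UniqModulus seg Φ)
    (ε b : ℝ) (hε : 0 < ε) (hb : 0 < b) (x y z : X)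
    (hxy : dist x y ≤ b) (hxz : dist x z ≤ b) (hyz : dist y z ≤ Φ ε b / 2) :
    ∀ t ∈ Set.Icc (0:ℝ) 1,
      Metric.infDist (comb t x y) (seg x z) < ε ∧
        Metric.infDist (comb t x z) (seg x y) < ε := by
  intro t ht
  exact ⟨close_geodesics_aux seg hseg comb hcomb Φ hΦlt hΦ ε b hε hb x y z hxy hxz hyz t ht,
    close_geodesics_aux seg hseg comb hcomb Φ hΦlt hΦ ε b hε hb x z y hxz hxy
      (by rwa [dist_comm]) t ht⟩
end

section
/- Let b>0 and (aₙ) be a nonincreasing sequence in [0,b]. Then for every τ>0 and every function g:ℕ→ℕ, there exists I ≤ g̃^(⌈b/τ⌉)(0), where g̃=Id+g, such that for all n,m∈[0,g(I)], |a_{I+n} − a_{I+m}| ≤ τ. -/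
/-- Kohlenbach: quantitative metastability for nonincreasing sequences in `[0,b]`:
for all `τ > 0` and `g : ℕ → ℕ` there is `I ≤ g̃^(⌈b/τ⌉)(0)`, `g̃ = Id + g`, such that
`|a_{I+n} - a_{I+m}| ≤ τ` for all `n, m ∈ [0, g(I)]`. -/
theorem metastability_monotone_seq (b : ℝ) (hb : 0 < b) (a : ℕ → ℝ)
    (hmono : ∀ n, a (n + 1) ≤ a n) (hrange : ∀ n, a n ∈ Set.Icc 0 b) :
    ∀ τ > (0:ℝ), ∀ g : ℕ → ℕ,
      ∃ I ≤ (fun n => n + g n)^[⌈b / τ⌉₊] 0,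
        ∀ n ≤ g I, ∀ m ≤ g I, |a (I + n) - a (I + m)| ≤ τ := by
  intro τ hτ g
  have hanti : Antitone a := antitone_nat_of_succ_le hmono
  set gt : ℕ → ℕ := fun n => n + g n with hgt
  set K := ⌈b / τ⌉₊ with hK
  have hK1 : 1 ≤ K := Nat.one_le_ceil_iff.mpr (div_pos hb hτ)
  set I : ℕ → ℕ := fun k => gt^[k] 0 with hI
  have hIsucc : ∀ k, I (k + 1) = I k + g (I k) := by
    intro k; simp [hI, Function.iterate_succ_apply']; rfl
  have hImono : Monotone I := by
    apply monotone_nat_of_le_succ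
    intro k; rw [hIsucc]; exact Nat.le_add_right _ _
  -- find k < K with a (I k) - a (I (k+1)) ≤ τ
  have hex : ∃ k < K, a (I k) - a (I (k + 1)) ≤ τ := by
    by_contra h
    push_neg at h
    have key : ∀ j, 1 ≤ j → j ≤ K → a (I j) + j * τ < a 0 := by
      intro j hj1 hjK
      induction j with
      | zero => omega
      | succ j ih =>
        have hstep : τ < a (I j) - a (I (j + 1)) := h j (by omega)
        rcases Nat.eq_zero_or_pos j with hj0 | hj0
        · subst hj0
          have : a (I 0) = a 0 := by simp [hI]
          push_cast; nlinarith
        · have := ih (by omega) (by omega)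
          push_cast; push_cast at this; nlinarith
    have hfin := key K hK1 le_rfl
    have hceil : b / τ ≤ (K : ℝ) := Nat.le_ceil _
    have hKτ : b ≤ K * τ := by
      rw [div_le_iff₀ hτ] at hceil; linarith
    have h0 := (hrange (I K)).1
    have h1 := (hrange 0).2
    linarith
  obtain ⟨k, hkK, hk⟩ := hex
  refine ⟨I k, hImono (le_of_lt hkK), ?_⟩
  intro n hn m hm
  have hub : ∀ p ≤ g (I k), a (I k + p) ≤ a (I k) := fun p _ =>
    hanti (Nat.le_add_right _ _)
  have hlb : ∀ p ≤ g (I k), a (I (k + 1)) ≤ a (I k + p) := by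
    intro p hp
    rw [hIsucc]
    exact hanti (Nat.add_le_add_left hp _)
  rw [abs_sub_le_iff]
  constructor
  · have := hub n hn; have := hlb m hm; linarith
  · have := hub m hm; have := hlb n hn; linarith
end

section
/- Quantitative Lion-Man theorem: Let the Lion-Man game be played in a nonempty convex bounded subset A of diameter b ≥ D of a uniquely geodesic space X that is uniformly uniquely geodesic with modulus Φ and satisfies the uniform betweenness property with modulus Θ, where Φ(ε,b)<ε and Θ(ε,a,b)<ε for all ε,a>0. Let N∈ℕ with b+1<ND, set Δ(ε)=Θ(ε,ε,b), Ψ(ε)=Φ(Δ(ε),b)/2, and for α>0 choose 0<ε≤min{1/(3N), D/4, α/3}. Then for all n ≥ N + N·⌈b/Φ(Ψ^N(ε),b)⌉, one has Dₙ = d(Lₙ,Mₙ) < D + α. -/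
open Metric Set

set_option maxHeartbeats 2000000

/-- Quantitative Lion-Man theorem: in a bounded convex domain of diameter `b ≥ D` of a
uniformly uniquely geodesic space with modulus `Φ` satisfying the uniform betweenness
property with modulus `Θ` (both below the identity at `b`), for `N` with `b + 1 < N·D`,
`Δ(ε) = Θ(ε,ε,b)`, `Ψ(ε) = Φ(Δ(ε),b)/2` and `0 < ε ≤ min{1/(3N), D/4, α/3}`, one has
`Dₙ = d(Lₙ,Mₙ) < D + α` for all `n ≥ N + N·⌈b/Φ(Ψ^N(ε),b)⌉`. -/
theorem lionMan_quantitative {X : Type*} [MetricSpace X]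
    (huniq : UniquelyGeodesic X) (seg : X → X → Set X) (hseg : IsSegSystem seg)
    (Φ : ℝ → ℝ → ℝ) (Θ : ℝ → ℝ → ℝ → ℝ)
    (hΦpos : ∀ ε > (0:ℝ), ∀ b' > (0:ℝ), 0 < Φ ε b')
    (hΘpos : ∀ ε > (0:ℝ), ∀ a > (0:ℝ), ∀ b' > (0:ℝ), 0 < Θ ε a b')
    (hΦ : UniqModulus seg Φ) (hΘ : BtwModulus seg Θ)
    (A : Set X) (hA : A.Nonempty) (hconvA : ∀ x ∈ A, ∀ y ∈ A, seg x y ⊆ A)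
    (b D : ℝ) (hD : 0 < D) (hDb : D ≤ b) (hdiam : Metric.diam A = b)
    (hΦb : ∀ ε > (0:ℝ), Φ ε b < ε) (hΘb : ∀ ε > (0:ℝ), ∀ a > (0:ℝ), Θ ε a b < ε)
    (N : ℕ) (hN : b + 1 < N * D)
    (L M : ℕ → X) (hLA : ∀ n, L n ∈ A) (hMA : ∀ n, M n ∈ A)
    (hlion : ∀ n, L (n + 1) ∈ seg (L n) (M n) ∧
      dist (L n) (L (n + 1)) = min D (dist (L n) (M n)))
    (hman : ∀ n, dist (M n) (M (n + 1)) ≤ D)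
    (α ε : ℝ) (hα : 0 < α) (hε : 0 < ε)
    (hεle : ε ≤ min ((1:ℝ) / (3 * N)) (min (D / 4) (α / 3))) :
    ∀ n ≥ N + N * ⌈b / Φ ((fun e => Φ (Θ e e b) b / 2)^[N] ε) b⌉₊,
      dist (L n) (M n) < D + α := by
  classical
  have hb : (0:ℝ) < b := lt_of_lt_of_le hD hDb
  have hεD4 : ε ≤ D / 4 := hεle.trans ((min_le_right _ _).trans (min_le_left _ _))
  have hεα3 : ε ≤ α / 3 := hεle.trans ((min_le_right _ _).trans (min_le_right _ _))
  -- boundedness of A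
  have hbdd : Bornology.IsBounded A := by
    by_contra hbd
    have h0 : Metric.diam A = 0 := Metric.diam_eq_zero_of_unbounded hbd
    rw [hdiam] at h0; linarith
  have hAb : ∀ p ∈ A, ∀ q ∈ A, dist p q ≤ b := by
    intro p hp q hq
    calc dist p q ≤ Metric.diam A := Metric.dist_le_diam_of_mem hbdd hp hq
    _ = b := hdiam
  -- segment properties
  have hsegprop : ∀ x y : X, x ∈ seg x y ∧ y ∈ seg x y ∧
      ∀ p ∈ seg x y, dist x p + dist p y = dist x y := by
    intro x y
    obtain ⟨γ, ⟨hγ0, hγd, hγiso⟩, hγimg⟩ := hseg x y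
    have hd0 : (0:ℝ) ≤ dist x y := dist_nonneg
    refine ⟨?_, ?_, ?_⟩
    · rw [hγimg]; exact ⟨0, ⟨le_refl 0, hd0⟩, hγ0⟩
    · rw [hγimg]; exact ⟨dist x y, ⟨hd0, le_refl _⟩, hγd⟩
    · intro p hp
      rw [hγimg] at hp
      obtain ⟨t, ht, rfl⟩ := hp
      have h1 : dist x (γ t) = t := by
        have h := hγiso 0 ⟨le_refl 0, hd0⟩ t ht
        rw [hγ0] at h
        rw [h, zero_sub, abs_neg, abs_of_nonneg ht.1]
      have h2 : dist (γ t) y = dist x y - t := by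
        have h := hγiso t ht (dist x y) ⟨hd0, le_refl _⟩
        rw [hγd] at h
        rw [h, abs_of_nonpos (by linarith [ht.2]), neg_sub]
      rw [h1, h2]; ring
  have hsegL : ∀ x y : X, x ∈ seg x y := fun x y => (hsegprop x y).1
  have hsegadd : ∀ x y : X, ∀ p ∈ seg x y, dist x p + dist p y = dist x y :=
    fun x y => (hsegprop x y).2.2
  -- Ψ and its iterates
  set Ψ : ℝ → ℝ := fun e => Φ (Θ e e b) b / 2 with hΨdef
  have hΨlt : ∀ e : ℝ, 0 < e → 0 < Ψ e ∧ Ψ e < Θ e e b / 2 ∧ Θ e e b < e := by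
    intro e he
    have hΘe : 0 < Θ e e b := hΘpos e he e he b hb
    have h1 : Φ (Θ e e b) b < Θ e e b := hΦb _ hΘe
    have h0 : 0 < Φ (Θ e e b) b := hΦpos _ hΘe b hb
    refine ⟨by simp only [hΨdef]; linarith, by simp only [hΨdef]; linarith, hΘb e he e he⟩
  have hE : ∀ i : ℕ, 0 < Ψ^[i] ε ∧ Ψ^[i] ε ≤ ε / 2 ^ i := by
    intro i; induction i with
    | zero => simp [hε, le_refl]
    | succ i ih =>
      rw [Function.iterate_succ_apply']
      obtain ⟨h1, h2, h3⟩ := hΨlt _ ih.1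
      have hp : (0:ℝ) < 2 ^ i := by positivity
      refine ⟨h1, ?_⟩
      have h4 : Ψ (Ψ^[i] ε) < Ψ^[i] ε / 2 := by linarith
      have h5 : Ψ^[i] ε / 2 ≤ ε / 2 ^ i / 2 := by linarith [ih.2]
      rw [pow_succ, ← div_div]
      linarith
  have hEpos : ∀ i : ℕ, 0 < Ψ^[i] ε := fun i => (hE i).1
  have hEε : ∀ i : ℕ, Ψ^[i] ε ≤ ε := fun i =>
    (hE i).2.trans (div_le_self hε.le (one_le_pow₀ (by norm_num)))
  have hΨΘ : ∀ e : ℝ, 0 < e → Ψ e < Θ e e b := by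
    intro e he
    obtain ⟨h1, h2, h3⟩ := hΨlt e he
    have h4 : 0 < Θ e e b := hΘpos e he e he b hb
    linarith
  set η : ℝ := Ψ^[N] ε with hηdef
  have hηpos : 0 < η := hEpos N
  have hηε : η ≤ ε := hEε N
  set τ : ℝ := Φ η b with hτdef
  have hτpos : 0 < τ := hΦpos η hηpos b hb
  have hτη : τ < η := hΦb η hηpos
  have hτε : τ ≤ ε := by linarith
  set K : ℕ := ⌈b / τ⌉₊ with hKdef
  -- basic dynamics
  have hstep : ∀ k : ℕ, D ≤ dist (L k) (M k) →
      dist (L k) (L (k+1)) = D ∧ dist (L (k+1)) (M k) = dist (L k) (M k) - D ∧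
      dist (L (k+1)) (M (k+1)) ≤ dist (L k) (M k) := by
    intro k hk
    have h1 : dist (L k) (L (k+1)) = D := by rw [(hlion k).2, min_eq_left hk]
    have hadd := hsegadd (L k) (M k) _ (hlion k).1
    rw [h1] at hadd
    refine ⟨h1, by linarith, ?_⟩
    calc dist (L (k+1)) (M (k+1)) ≤ dist (L (k+1)) (M k) + dist (M k) (M (k+1)) :=
        dist_triangle _ _ _
    _ ≤ (dist (L k) (M k) - D) + D := add_le_add (by linarith) (hman k)
    _ = dist (L k) (M k) := by ring
  have hcatch : ∀ k : ℕ, dist (L k) (M k) < D + α → dist (L (k+1)) (M (k+1)) < D + α := by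
    intro k hk
    rcases le_or_gt D (dist (L k) (M k)) with h | h
    · exact lt_of_le_of_lt (hstep k h).2.2 hk
    · have h1 : dist (L k) (L (k+1)) = dist (L k) (M k) := by
        rw [(hlion k).2, min_eq_right h.le]
      have hadd := hsegadd (L k) (M k) _ (hlion k).1
      rw [h1] at hadd
      have h2 : dist (L (k+1)) (M k) = 0 := by linarith
      rw [dist_eq_zero] at h2
      rw [h2]
      exact lt_of_le_of_lt (hman k) (by linarith)
  intro n hn
  -- the key existence statement
  have hkey : ∃ k, k ≤ N + N * K ∧ dist (L k) (M k) < D + α := by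
    by_contra hcon
    push_neg at hcon
    have hdge : ∀ k, k ≤ N + N * K → D ≤ dist (L k) (M k) := fun k hk => by
      linarith [hcon k hk]
    have hmono : ∀ k c : ℕ, k + c ≤ N + N * K →
        dist (L (k+c)) (M (k+c)) ≤ dist (L k) (M k) := by
      intro k c
      induction c with
      | zero => exact fun _ => le_rfl
      | succ c ih =>
        intro h
        have h1 : k + c ≤ N + N * K := by omega
        exact le_trans ((hstep (k+c) (hdge _ h1)).2.2) (ih h1)
    have hmono' : ∀ k l : ℕ, k ≤ l → l ≤ N + N * K →
        dist (L l) (M l) ≤ dist (L k) (M k) := by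
      intro k l hkl hl
      have h := hmono k (l - k) (by omega)
      rwa [Nat.add_sub_cancel' hkl] at h
    have hNpos : 1 ≤ N := by
      by_contra hN0
      have hN0' : N = 0 := by omega
      rw [hN0'] at hN
      norm_num at hN
      linarith
    -- pigeonhole: a window of N steps with all drops < τ
    have hwin : ∃ m, m + N ≤ N + N * K ∧ ∀ k, m ≤ k → k < m + N →
        dist (L k) (M k) - dist (L (k+1)) (M (k+1)) < τ := by
      by_contra hw
      push_neg at hw
      have hiter : ∀ i : ℕ, i ≤ K + 1 →
          dist (L (i*N)) (M (i*N)) ≤ dist (L 0) (M 0) - i * τ := by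
        intro i
        induction i with
        | zero => intro _; simp
        | succ i ih =>
          intro hi
          have hle : i * N + N ≤ N + N * K := by
            have h1 : (i+1) * N ≤ (K+1) * N := Nat.mul_le_mul_right _ (by omega)
            calc i*N + N = (i+1)*N := by ring
            _ ≤ (K+1)*N := h1
            _ = N + N*K := by ring
          obtain ⟨k, hk1, hk2, hk3⟩ := hw (i*N) hle
          have heqN : (i+1)*N = i*N + N := by ring
          have h2 : dist (L ((i+1)*N)) (M ((i+1)*N)) ≤ dist (L (k+1)) (M (k+1)) := by
            apply hmono' (k+1) ((i+1)*N) (by omega) (by omega)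
          have h3 : dist (L k) (M k) ≤ dist (L (i*N)) (M (i*N)) :=
            hmono' (i*N) k hk1 (by omega)
          have h4 := ih (by omega)
          push_cast
          push_cast at h4
          linarith
      have hfin := hiter (K+1) le_rfl
      have heq : (K+1) * N = N + N * K := by ring
      rw [heq] at hfin
      have hd0 : dist (L 0) (M 0) ≤ b := hAb _ (hLA 0) _ (hMA 0)
      have hKb : b ≤ (K:ℝ) * τ := by
        have h1 : b / τ ≤ (K:ℝ) := by rw [hKdef]; exact Nat.le_ceil (b / τ)
        calc b = (b / τ) * τ := by field_simp
        _ ≤ (K:ℝ) * τ := mul_le_mul_of_nonneg_right h1 hτpos.le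
      have hlast := hcon (N + N*K) le_rfl
      push_cast at hfin
      linarith
    obtain ⟨m, hmN, hgood⟩ := hwin
    have hdw : ∀ k, k ≤ m + N → D + α ≤ dist (L k) (M k) := fun k hk =>
      hcon k (le_trans hk hmN)
    have hMM : ∀ k, m ≤ k → k < m + N → D - τ ≤ dist (M k) (M (k+1)) := by
      intro k h1 h2
      have hd1 := hdw k (by omega)
      have hst := hstep k (by linarith)
      have hdr := hgood k h1 h2
      have htr : dist (L (k+1)) (M (k+1)) ≤ dist (L (k+1)) (M k) + dist (M k) (M (k+1)) :=
        dist_triangle _ _ _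
      rw [hst.2.1] at htr
      linarith
    -- Step 1: M k is η-close to seg (L (k+1)) (M (k+1))
    have hS1 : ∀ k, m ≤ k → k < m + N →
        infDist (M k) (seg (L (k+1)) (M (k+1))) < η := by
      intro k h1 h2
      have hdk := hdw k (by omega)
      have hdk1 := hdw (k+1) (by omega)
      have hst := hstep k (by linarith)
      have hdr := hgood k h1 h2
      have hmo := hst.2.2
      have hdkb : dist (L k) (M k) ≤ b := hAb _ (hLA k) _ (hMA k)
      refine hΦ η hηpos b hb (L (k+1)) (M (k+1)) (M k)
        (dist (L k) (M k) - D) (Set.mem_Ioc.mpr ⟨by linarith, by linarith⟩)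
        (dist (L (k+1)) (M (k+1)) - (dist (L k) (M k) - D))
        (Set.mem_Ioc.mpr ⟨by linarith, by linarith⟩) ?_ ?_ ?_
      · rw [dist_comm]; exact le_of_eq hst.2.1
      · rw [← hτdef]
        linarith [hman k]
      · linarith
    -- helpers for Θ applications
    have hsep : ∀ (x y z w : X) (a : ℝ), a ≤ dist x y → a ≤ dist x z → a ≤ dist x w →
        a ≤ dist y z → a ≤ dist y w → a ≤ dist z w →
        ∀ u ∈ ({x,y,z,w} : Set X), ∀ v ∈ ({x,y,z,w} : Set X), u ≠ v → a ≤ dist u v := by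
      intro x y z w a h1 h2 h3 h4 h5 h6 u hu v hv huv
      simp only [Set.mem_insert_iff, Set.mem_singleton_iff] at hu hv
      rcases hu with rfl|rfl|rfl|rfl <;> rcases hv with rfl|rfl|rfl|rfl <;>
        first
          | exact absurd rfl huv
          | assumption
          | (rw [dist_comm]; assumption)
    have hdiam4 : ∀ x y z w : X, x ∈ A → y ∈ A → z ∈ A → w ∈ A →
        ∀ u ∈ ({x,y,z,w} : Set X), ∀ v ∈ ({x,y,z,w} : Set X), dist u v ≤ b := by
      intro x y z w hx hy hz hw u hu v hv
      simp only [Set.mem_insert_iff, Set.mem_singleton_iff] at hu hv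
      rcases hu with rfl|rfl|rfl|rfl <;> rcases hv with rfl|rfl|rfl|rfl <;>
        exact hAb _ (by assumption) _ (by assumption)
    have hcbound : ∀ i : ℕ, i ≤ N → 2^(i+2) * ε / 2^N ≤ 4 * ε := by
      intro i hi
      have h1 : (2:ℝ)^(i+2) ≤ 2^(N+2) := pow_le_pow_right₀ (by norm_num) (by omega)
      have h2 : (0:ℝ) < 2^N := by positivity
      have h3 : (2:ℝ)^(N+2) = 4 * 2^N := by rw [pow_add]; ring
      calc 2^(i+2) * ε / 2^N ≤ 2^(N+2) * ε / 2^N := by gcongr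
      _ = 4 * ε := by rw [h3]; field_simp
    have hpos2N : (0:ℝ) < 2^N := by positivity
    -- the main induction
    have main : ∀ t : ℕ, ∀ k : ℕ, m ≤ k → k + t + 1 ≤ m + N →
        infDist (L (k+1)) (seg (L k) (M (k+t+1))) < Ψ^[N-1-t] ε ∧
        infDist (M (k+t)) (seg (L k) (M (k+t+1))) < Ψ^[N-1-t] ε ∧
        ∀ i : ℕ, i ≤ t + 1 →
          dist (L (k+i)) (M (k+i)) + i * D - 2^(i+2) * ε / 2^N ≤ dist (L k) (M (k+i)) := by
      intro t
      induction t with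
      | zero =>
        intro k hk1 hk2
        have hdk := hdw k (by omega)
        have hdk1 := hdw (k+1) (by omega)
        have hst := hstep k (by linarith)
        have he1pos : 0 < Ψ^[N-1] ε := hEpos (N-1)
        have he1ε : Ψ^[N-1] ε ≤ ε := hEε (N-1)
        have hNpos : 1 ≤ N := by omega
        have hfeed : η < Θ (Ψ^[N-1] ε) (Ψ^[N-1] ε) b := by
          have hNe : η = Ψ (Ψ^[N-1] ε) := by
            conv_lhs => rw [hηdef, show N = (N-1)+1 from by omega]
            rw [Function.iterate_succ_apply']
          rw [hNe]; exact hΨΘ _ he1pos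
        have hLM1 : dist (L (k+1)) (M (k+1)) - D ≤ dist (L k) (M (k+1)) := by
          have h := dist_triangle (L (k+1)) (L k) (M (k+1))
          rw [dist_comm (L (k+1)) (L k), hst.1] at h
          linarith
        have hMMk := hMM k (by omega) (by omega)
        obtain ⟨hQ, hR⟩ := hΘ (Ψ^[N-1] ε) he1pos (Ψ^[N-1] ε) he1pos b hb
          (L k) (L (k+1)) (M k) (M (k+1))
          (hsep _ _ _ _ _
            (by rw [hst.1]; linarith)
            (by linarith)
            (by linarith)
            (by rw [hst.2.1]; linarith)
            (by linarith)
            (by linarith))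
          (hdiam4 _ _ _ _ (hLA k) (hLA (k+1)) (hMA k) (hMA (k+1)))
          (by
            have h0 : infDist (L (k+1)) (seg (L k) (M k)) ≤ 0 := by
              have h := Metric.infDist_le_dist_of_mem (x := L (k+1)) (hlion k).1
              simpa using h
            have hpos : 0 < Θ (Ψ^[N-1] ε) (Ψ^[N-1] ε) b := hΘpos _ he1pos _ he1pos b hb
            linarith)
          (lt_trans (hS1 k (by omega) (by omega)) hfeed)
        refine ⟨hQ, hR, ?_⟩
        intro i hi
        interval_cases i
        · have hpos4 : (0:ℝ) ≤ 2^(0+2) * ε / 2^N := by positivity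
          push_cast
          simp only [Nat.add_zero]
          linarith
        · obtain ⟨p, hp, hpd⟩ := (Metric.infDist_lt_iff ⟨L k, hsegL (L k) (M (k+1))⟩).mp hQ
          have hadd := hsegadd (L k) (M (k+1)) p hp
          have ht1 : D - Ψ^[N-1] ε ≤ dist (L k) p := by
            have h := dist_triangle (L k) p (L (k+1))
            rw [dist_comm p (L (k+1))] at h
            rw [hst.1] at h
            linarith
          have ht2 : dist (L (k+1)) (M (k+1)) - Ψ^[N-1] ε ≤ dist p (M (k+1)) := by
            have h := dist_triangle (L (k+1)) p (M (k+1))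
            linarith
          have hNe2 : (2:ℝ)^(N-1) * 2 = 2^N := by
            rw [← pow_succ]
            congr 1
            omega
          have he1b : Ψ^[N-1] ε ≤ 2 * ε / 2^N := by
            have h1 := (hE (N-1)).2
            have h2 : ε / 2^(N-1) = 2*ε/2^N := by
              rw [div_eq_div_iff (by positivity) (by positivity), ← hNe2]; ring
            linarith
          have h8 : (2:ℝ)^(1+2) * ε / 2^N = 4 * (2 * ε / 2^N) := by ring
          have h9 : (0:ℝ) ≤ 2 * ε / 2^N := by positivity
          push_cast
          rw [h8]
          linarith [hadd, ht1, ht2, he1b, h9]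
      | succ t ih =>
        intro k hk1 hk2
        have htN : t + 2 ≤ N := by omega
        have ihk := ih k hk1 (by omega)
        have ihk1 := ih (k+1) (by omega) (by omega)
        -- index-normalized pieces of ihk1
        have hb2 := ihk1.2.1
        rw [show k+1+t = k+t+1 from by omega] at hb2
        have hc2a : dist (L (k+t+1)) (M (k+t+1)) + (t:ℝ) * D - 2^(t+2) * ε / 2^N ≤
            dist (L (k+1)) (M (k+t+1)) := by
          have h := ihk1.2.2 t (by omega)
          rw [show k+1+t = k+t+1 from by omega] at h
          push_cast at h
          linarith
        have hc2b : dist (L (k+t+2)) (M (k+t+2)) + ((t:ℝ)+1) * D - 2^(t+3) * ε / 2^N ≤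
            dist (L (k+1)) (M (k+t+2)) := by
          have h := ihk1.2.2 (t+1) (by omega)
          rw [show k+1+(t+1) = k+t+2 from by omega] at h
          push_cast at h
          linarith
        have hc1b : dist (L (k+t+1)) (M (k+t+1)) + ((t:ℝ)+1) * D - 2^(t+3) * ε / 2^N ≤
            dist (L k) (M (k+t+1)) := by
          have h := ihk.2.2 (t+1) (by omega)
          simp only [show k+(t+1) = k+t+1 from rfl, show (t+1)+2 = t+3 from rfl] at h
          push_cast at h
          linarith
        rw [show N-1-(t+1) = N-2-t from by omega]
        set eS : ℝ := Ψ^[N-2-t] ε with heSdef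
        have heSpos : 0 < eS := hEpos _
        have heSε : eS ≤ ε := hEε _
        have heT : Ψ^[N-1-t] ε = Ψ eS := by
          rw [show N-1-t = (N-2-t)+1 from by omega, Function.iterate_succ_apply']
        have hfeed : Ψ^[N-1-t] ε < Θ eS eS b := by rw [heT]; exact hΨΘ _ heSpos
        have hdk := hdw k (by omega)
        have hdkt1 := hdw (k+t+1) (by omega)
        have hdkt2 := hdw (k+t+2) (by omega)
        have hst := hstep k (by linarith)
        have hMMt := hMM (k+t+1) (by omega) (by omega)
        have hcb1 := hcbound t (by omega)
        have hcb2 := hcbound (t+1) (by omega)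
        have hcb2' : 2^(t+3) * ε / 2^N ≤ 4 * ε := by
          have := hcbound (t+1) (by omega)
          simpa [show (t+1)+2 = t+3 from rfl] using this
        have htpos : (0:ℝ) ≤ (t:ℝ) * D := by positivity
        have ht1pos : (0:ℝ) ≤ ((t:ℝ)+1) * D := by positivity
        have htD : D ≤ ((t:ℝ)+1) * D := by linarith [htpos]
        obtain ⟨hQ, hR⟩ := hΘ eS heSpos eS heSpos b hb
          (L k) (L (k+1)) (M (k+t+1)) (M (k+t+2))
          (hsep _ _ _ _ _
            (by rw [hst.1]; linarith)
            (by linarith)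
            (by
              have htr := dist_triangle (L (k+1)) (L k) (M (k+t+2))
              rw [dist_comm (L (k+1)) (L k), hst.1] at htr
              linarith)
            (by linarith)
            (by linarith)
            (by linarith))
          (hdiam4 _ _ _ _ (hLA k) (hLA (k+1)) (hMA (k+t+1)) (hMA (k+t+2)))
          (lt_trans ihk.1 hfeed)
          (lt_trans hb2 hfeed)
        refine ⟨hQ, hR, ?_⟩
        intro i hi
        rcases le_or_gt i (t+1) with h | h
        · exact ihk.2.2 i h
        · have hieq : i = t+2 := by omega
          subst hieq
          obtain ⟨p, hp, hpd⟩ :=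
            (Metric.infDist_lt_iff ⟨L k, hsegL (L k) (M (k+t+2))⟩).mp hQ
          have hadd := hsegadd (L k) (M (k+t+2)) p hp
          have ht1 : D - eS ≤ dist (L k) p := by
            have h' := dist_triangle (L k) p (L (k+1))
            rw [dist_comm p (L (k+1)), hst.1] at h'
            linarith
          have ht2 : dist (L (k+1)) (M (k+t+2)) - eS ≤ dist p (M (k+t+2)) := by
            have h' := dist_triangle (L (k+1)) p (M (k+t+2))
            linarith
          have hes2 : 2 * eS ≤ 2^(t+3) * ε / 2^N := by
            have h1 : eS ≤ ε / 2^(N-2-t) := by rw [heSdef]; exact (hE _).2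
            have hpow : (2:ℝ)^(N-2-t) * 2^(t+2) = 2^N := by
              rw [← pow_add]; congr 1; omega
            have h2 : ε / 2^(N-2-t) = 2^(t+2) * ε / 2^N := by
              rw [div_eq_div_iff (by positivity) (by positivity), ← hpow]; ring
            rw [h2] at h1
            calc 2 * eS ≤ 2 * (2^(t+2) * ε / 2^N) := by linarith
            _ = 2^(t+3) * ε / 2^N := by ring
          have hpw : (2:ℝ)^(t+2+2) * ε / 2^N = 2 * (2^(t+3) * ε / 2^N) := by ring
          simp only [show k+(t+2) = k+t+2 from rfl]
          push_cast
          rw [hpw]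
          linarith [hadd, ht1, ht2, hc2b, hes2]
    -- final contradiction
    have hNpos : 1 ≤ N := by
      by_contra hN0
      have hN0' : N = 0 := by omega
      rw [hN0'] at hN
      norm_num at hN
      linarith
    have hfin := (main (N-1) m le_rfl (by omega)).2.2 N (by omega)
    have hub : dist (L m) (M (m+N)) ≤ b := hAb _ (hLA m) _ (hMA (m+N))
    have hdmN := hdw (m+N) le_rfl
    have h4 : 2^(N+2) * ε / 2^N = 4 * ε := by
      rw [pow_add]
      field_simp
      ring
    rw [h4] at hfin
    have hmNeq : m + N = m + N := rfl
    linarith [hN, hfin]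
  obtain ⟨k, hk, hdk⟩ := hkey
  have hprop : ∀ i : ℕ, dist (L (k+i)) (M (k+i)) < D + α := by
    intro i; induction i with
    | zero => exact hdk
    | succ i ih => exact hcatch (k+i) ih
  have h := hprop (n - k)
  rwa [Nat.add_sub_cancel' (le_trans hk hn)] at h
end
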